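/- arXiv:1705.03969 — 7 statements merged into one kernel-verified Lean document; each statement's English description precedes it below -/
import Mathlib

section
/- If y is a continuous solution on [0,a] of the tempered fractional terminal value problem D^{α,λ} y(t) = f(t, y(t)) on [0,a] with terminal condition e^{λa} y(a) = y_a, where 0 < α < 1, λ ≥ 0 and f is continuous, then y satisfies the integral equation y(t) = y_a e^{-λt} − (e^{-λt}/Γ(α)) [∫₀ᵃ e^{λs}(a−s)^{α−1} f(s,y(s)) ds − ∫₀ᵗ e^{λs}(t−s)^{α−1} f(s,y(s)) ds] for all t ∈ [0,a]. -/
open Real Set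
open MeasureTheory intervalIntegral

lemma real_beta {α : ℝ} (hα0 : 0 < α) (hα1 : α < 1) :
    ∫ x in (0:ℝ)..1, x ^ (-α) * (1 - x) ^ (α - 1) = Real.Gamma (1 - α) * Real.Gamma α := by
  have h1 : (0:ℝ) < 1 - α := by linarith
  have hC := Complex.Gamma_mul_Gamma_eq_betaIntegral (s := ((1 - α : ℝ) : ℂ)) (t := ((α : ℝ) : ℂ))
    (by simpa using h1) (by simpa using hα0)
  rw [Complex.betaIntegral] at hC
  have hsum : ((1 - α : ℝ) : ℂ) + ((α : ℝ) : ℂ) = 1 := by push_cast; ring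
  rw [hsum, Complex.Gamma_one, one_mul] at hC
  have hint : (∫ x in (0:ℝ)..1, (x : ℂ) ^ (((1 - α : ℝ) : ℂ) - 1) * ((1:ℂ) - x) ^ (((α : ℝ) : ℂ) - 1))
      = ((∫ x in (0:ℝ)..1, x ^ (-α) * (1 - x) ^ (α - 1) : ℝ) : ℂ) := by
    rw [← intervalIntegral.integral_ofReal]
    apply intervalIntegral.integral_congr
    intro x hx
    rw [uIcc_of_le (by norm_num : (0:ℝ) ≤ 1)] at hx
    obtain ⟨hx0, hx1⟩ := hx
    have eα : ((1 - α : ℝ) : ℂ) - 1 = ((-α : ℝ) : ℂ) := by push_cast; ring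
    have eβ : ((α : ℝ) : ℂ) - 1 = ((α - 1 : ℝ) : ℂ) := by push_cast; ring
    have e1x : (1 : ℂ) - (x : ℂ) = ((1 - x : ℝ) : ℂ) := by push_cast; ring
    show (x : ℂ) ^ (((1 - α : ℝ) : ℂ) - 1) * ((1:ℂ) - x) ^ (((α : ℝ) : ℂ) - 1)
        = ((x ^ (-α) * (1 - x) ^ (α - 1) : ℝ) : ℂ)
    rw [eα, eβ, e1x, Complex.ofReal_mul, Complex.ofReal_cpow hx0,
      Complex.ofReal_cpow (by linarith : (0:ℝ) ≤ 1 - x)]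
  rw [hint, Complex.Gamma_ofReal, Complex.Gamma_ofReal, ← Complex.ofReal_mul] at hC
  exact_mod_cast hC.symm

lemma kernel_integral {α : ℝ} (hα0 : 0 < α) (hα1 : α < 1) {u t : ℝ} (hut : u < t) :
    ∫ s in u..t, (t - s) ^ (α - 1) * (s - u) ^ (-α) = Real.Gamma (1 - α) * Real.Gamma α := by
  set c := t - u with hc
  have hcpos : 0 < c := by simp [hc]; linarith
  have step1 : ∫ s in u..t, (t - s) ^ (α - 1) * (s - u) ^ (-α)
      = ∫ w in (0:ℝ)..c, (c - w) ^ (α - 1) * w ^ (-α) := by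
    have := intervalIntegral.integral_comp_add_right
      (f := fun s => (t - s) ^ (α - 1) * (s - u) ^ (-α)) (a := (0:ℝ)) (b := c) (d := u)
    simp only [zero_add, hc] at this
    rw [sub_add_cancel] at this
    rw [← this]
    apply intervalIntegral.integral_congr
    intro w hw
    show (t - (w + u)) ^ (α - 1) * (w + u - u) ^ (-α) = (c - w) ^ (α - 1) * w ^ (-α)
    have h2 : t - (w + u) = c - w := by rw [hc]; ring
    rw [h2, add_sub_cancel_right]
  have step2 : ∫ w in (0:ℝ)..c, (c - w) ^ (α - 1) * w ^ (-α)
      = c • ∫ x in (0:ℝ)..1, (c - x * c) ^ (α - 1) * (x * c) ^ (-α) := by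
    rw [intervalIntegral.smul_integral_comp_mul_right
      (f := fun w => (c - w) ^ (α - 1) * w ^ (-α)) c]
    norm_num
  have step3 : ∫ x in (0:ℝ)..1, (c - x * c) ^ (α - 1) * (x * c) ^ (-α)
      = (c ^ (α - 1) * c ^ (-α)) * ∫ x in (0:ℝ)..1, x ^ (-α) * (1 - x) ^ (α - 1) := by
    rw [← intervalIntegral.integral_const_mul]
    apply intervalIntegral.integral_congr
    intro x hx
    rw [uIcc_of_le (by norm_num : (0:ℝ) ≤ 1)] at hx
    obtain ⟨hx0, hx1⟩ := hx
    show (c - x * c) ^ (α - 1) * (x * c) ^ (-α) = c ^ (α - 1) * c ^ (-α) * (x ^ (-α) * (1 - x) ^ (α - 1))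
    have e1 : c - x * c = c * (1 - x) := by ring
    rw [e1, Real.mul_rpow hcpos.le (by linarith), mul_comm x c,
      Real.mul_rpow hcpos.le hx0]
    ring
  rw [step1, step2, step3, real_beta hα0 hα1]
  rw [smul_eq_mul, ← Real.rpow_add hcpos]
  have : α - 1 + -α = -1 := by ring
  rw [this, Real.rpow_neg_one]
  field_simp

lemma key_lemma {α a : ℝ} (hα0 : 0 < α) (hα1 : α < 1) (ha : 0 < a)
    (G' h : ℝ → ℝ) (hG' : Continuous G') (hh : Continuous h)
    (M : ℝ) (hM : ∀ x, |G' x| ≤ M)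
    (habel : ∀ s ∈ Icc (0:ℝ) a,
      ∫ u in (0:ℝ)..s, (s - u) ^ (-α) * G' u = Real.Gamma (1 - α) * h s) :
    ∀ t ∈ Icc (0:ℝ) a, ∫ s in (0:ℝ)..t, (t - s) ^ (α - 1) * h s
      = Real.Gamma α * ∫ u in (0:ℝ)..t, G' u := by
  intro t ht
  obtain ⟨ht0, hta⟩ := ht
  rcases eq_or_lt_of_le ht0 with rfl | htpos
  · simp
  have h1α : (0:ℝ) < 1 - α := by linarith
  have hΓ1 : 0 < Real.Gamma (1 - α) := Real.Gamma_pos_of_pos h1α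
  have hMnn : 0 ≤ M := le_trans (abs_nonneg _) (hM 0)
  set μ : Measure ℝ := volume.restrict (Ioo 0 t) with hμ
  set K : ℝ × ℝ → ℝ := fun p =>
    if p.2 < p.1 then (t - p.1) ^ (α - 1) * ((p.1 - p.2) ^ (-α) * G' p.2) else 0 with hK
  have hKmeas : Measurable K := by
    apply Measurable.ite (measurableSet_lt measurable_snd measurable_fst)
    · fun_prop
    · fun_prop
  have hKaesm : AEStronglyMeasurable K (μ.prod μ) := hKmeas.aestronglyMeasurable
  have hKapp : ∀ s u : ℝ,
      K (s, u) = if u < s then (t - s) ^ (α - 1) * ((s - u) ^ (-α) * G' u) else 0 :=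
    fun s u => rfl
  -- kernel integrability
  have hker0 : ∀ s : ℝ, IntegrableOn (fun u : ℝ => (s - u) ^ (-α)) (Ioo 0 s) volume := by
    intro s
    rcases le_or_gt s 0 with hs | hs
    · rw [Ioo_eq_empty (by linarith)]; simp
    · have h1 : IntervalIntegrable (fun x : ℝ => x ^ (-α)) volume 0 s :=
        intervalIntegrable_rpow' (by linarith)
      have h2 := (h1.comp_sub_left s).symm
      simp only [sub_zero, sub_self] at h2
      exact (intervalIntegrable_iff_integrableOn_Ioo_of_le hs.le).mp h2
  have hkerG : ∀ s : ℝ, IntegrableOn (fun u => (s - u) ^ (-α) * G' u) (Ioo 0 s) volume := by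
    intro s
    have h4 : IntegrableOn (fun u => G' u * (s - u) ^ (-α)) (Ioo 0 s) volume :=
      (hker0 s).bdd_mul (c := M) hG'.aestronglyMeasurable
        (ae_of_all _ fun x => by simpa [Real.norm_eq_abs] using hM x)
    exact h4.congr_fun (fun u _ => mul_comm _ _) measurableSet_Ioo
  -- rows of K are integrable
  have hrow : ∀ s ∈ Ioo (0:ℝ) t, Integrable (fun u => K (s, u)) μ := by
    intro s hs
    have hsub : Ioo (0:ℝ) s ⊆ Ioo 0 t := Ioo_subset_Ioo le_rfl hs.2.le
    have h5 : IntegrableOn (fun u => (t - s) ^ (α - 1) * ((s - u) ^ (-α) * G' u))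
        (Ioo 0 s) volume := (hkerG s).const_mul _
    have h6 : Integrable ((Ioo 0 s).indicator
        (fun u => (t - s) ^ (α - 1) * ((s - u) ^ (-α) * G' u))) μ := by
      rw [hμ, integrable_indicator_iff measurableSet_Ioo,
        IntegrableOn, Measure.restrict_restrict measurableSet_Ioo,
        inter_eq_self_of_subset_left hsub]
      exact h5
    refine h6.congr ?_
    filter_upwards [ae_restrict_mem measurableSet_Ioo] with u hu
    by_cases hus : u < s
    · rw [hKapp, if_pos hus, Set.indicator_of_mem (mem_Ioo.mpr ⟨hu.1, hus⟩)]
    · rw [hKapp, if_neg hus, Set.indicator_of_notMem (fun hc => hus (mem_Ioo.mp hc).2)]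
  -- value of the inner kernel integral
  have hkerval : ∀ s : ℝ, 0 < s →
      ∫ u in Ioo (0:ℝ) s, (s - u) ^ (-α) = s ^ (1 - α) / (1 - α) := by
    intro s hs
    rw [← integral_Ioc_eq_integral_Ioo, ← intervalIntegral.integral_of_le hs.le,
      intervalIntegral.integral_comp_sub_left (fun x => x ^ (-α)) s]
    simp only [sub_zero, sub_self]
    rw [integral_rpow (Or.inl (by linarith))]
    rw [Real.zero_rpow (by linarith : -α + 1 ≠ 0)]
    rw [show -α + 1 = 1 - α by ring]
    rw [sub_zero]
  -- integrability of K on the product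
  have hKint : Integrable K (μ.prod μ) := by
    rw [integrable_prod_iff hKaesm]
    constructor
    · filter_upwards [ae_restrict_mem measurableSet_Ioo] with s hs
      exact hrow s hs
    · have hg0 : Integrable (fun s => M * (t ^ (1 - α) / (1 - α)) * (t - s) ^ (α - 1)) μ := by
        have h1 : IntervalIntegrable (fun x : ℝ => x ^ (α - 1)) volume 0 t :=
          intervalIntegrable_rpow' (by linarith)
        have h2 := (h1.comp_sub_left t).symm
        simp only [sub_zero, sub_self] at h2
        have h3 := (intervalIntegrable_iff_integrableOn_Ioo_of_le htpos.le).mp h2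
        exact h3.const_mul _
      refine Integrable.mono' hg0 (hKaesm.norm.integral_prod_right') ?_
      filter_upwards [ae_restrict_mem measurableSet_Ioo] with s hs
      have hts : (0:ℝ) < t - s := by linarith [hs.2]
      have hbnd : Integrable ((Ioo 0 s).indicator
          (fun u => (t - s) ^ (α - 1) * ((s - u) ^ (-α) * M))) μ := by
        rw [hμ, integrable_indicator_iff measurableSet_Ioo,
          IntegrableOn, Measure.restrict_restrict measurableSet_Ioo,
          inter_eq_self_of_subset_left (Ioo_subset_Ioo le_rfl hs.2.le)]
        exact (((hker0 s).mul_const M).const_mul _)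
      have hle : ∫ u, ‖K (s, u)‖ ∂μ ≤
          ∫ u, (Ioo 0 s).indicator (fun u => (t - s) ^ (α - 1) * ((s - u) ^ (-α) * M)) u ∂μ := by
        refine integral_mono_ae (hrow s hs).norm hbnd ?_
        filter_upwards [ae_restrict_mem measurableSet_Ioo] with u hu
        by_cases hus : u < s
        · have hu0 : (0:ℝ) < u := hu.1
          have hsu : (0:ℝ) < s - u := by linarith
          rw [hKapp, if_pos hus, Set.indicator_of_mem (mem_Ioo.mpr ⟨hu.1, hus⟩), Real.norm_eq_abs,
            abs_mul, abs_mul, abs_of_nonneg (Real.rpow_nonneg hts.le _),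
            abs_of_nonneg (Real.rpow_nonneg hsu.le _)]
          exact mul_le_mul_of_nonneg_left
            (mul_le_mul_of_nonneg_left (hM u) (Real.rpow_nonneg hsu.le _))
            (Real.rpow_nonneg hts.le _)
        · rw [hKapp, if_neg hus, Set.indicator_of_notMem (fun hc => hus (mem_Ioo.mp hc).2)]
          simp
      have hval : ∫ u, (Ioo 0 s).indicator
            (fun u => (t - s) ^ (α - 1) * ((s - u) ^ (-α) * M)) u ∂μ
          = (t - s) ^ (α - 1) * (s ^ (1 - α) / (1 - α) * M) := by
        rw [hμ, MeasureTheory.integral_indicator measurableSet_Ioo,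
          Measure.restrict_restrict measurableSet_Ioo,
          inter_eq_self_of_subset_left (Ioo_subset_Ioo le_rfl hs.2.le)]
        rw [MeasureTheory.integral_const_mul]
        congr 1
        rw [MeasureTheory.integral_mul_const, hkerval s hs.1]
      rw [Real.norm_eq_abs, abs_of_nonneg (integral_nonneg (fun u => norm_nonneg _))]
      refine hle.trans ?_
      rw [hval]
      have hsle : s ^ (1 - α) ≤ t ^ (1 - α) :=
        Real.rpow_le_rpow hs.1.le hs.2.le h1α.le
      have h9 : (0:ℝ) ≤ (t - s) ^ (α - 1) := Real.rpow_nonneg hts.le _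
      rw [show M * (t ^ (1 - α) / (1 - α)) * (t - s) ^ (α - 1)
          = (t - s) ^ (α - 1) * (t ^ (1 - α) / (1 - α) * M) by ring]
      gcongr
  -- main computation
  have main : Real.Gamma (1 - α) * ∫ s in (0:ℝ)..t, (t - s) ^ (α - 1) * h s
      = Real.Gamma (1 - α) * (Real.Gamma α * ∫ u in (0:ℝ)..t, G' u) := by
    have stepA : Real.Gamma (1 - α) * ∫ s in (0:ℝ)..t, (t - s) ^ (α - 1) * h s
        = ∫ s, (∫ u, K (s, u) ∂μ) ∂μ := by
      rw [← intervalIntegral.integral_const_mul]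
      have e1 : ∫ s in (0:ℝ)..t, Real.Gamma (1 - α) * ((t - s) ^ (α - 1) * h s)
          = ∫ s in (0:ℝ)..t, (t - s) ^ (α - 1) * ∫ u in (0:ℝ)..s, (s - u) ^ (-α) * G' u := by
        apply intervalIntegral.integral_congr
        intro s hs
        rw [uIcc_of_le htpos.le] at hs
        show Real.Gamma (1 - α) * ((t - s) ^ (α - 1) * h s)
          = (t - s) ^ (α - 1) * ∫ u in (0:ℝ)..s, (s - u) ^ (-α) * G' u
        rw [habel s ⟨hs.1, hs.2.trans hta⟩]
        ring
      rw [e1, intervalIntegral.integral_of_le htpos.le, integral_Ioc_eq_integral_Ioo]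
      apply setIntegral_congr_fun measurableSet_Ioo
      intro s hs
      show (t - s) ^ (α - 1) * (∫ u in (0:ℝ)..s, (s - u) ^ (-α) * G' u) = ∫ u, K (s, u) ∂μ
      have e2 : ∫ u, K (s, u) ∂μ = ∫ u, (Ioo 0 s).indicator
          (fun u => (t - s) ^ (α - 1) * ((s - u) ^ (-α) * G' u)) u ∂μ := by
        apply MeasureTheory.integral_congr_ae
        filter_upwards [ae_restrict_mem measurableSet_Ioo] with u hu
        by_cases hus : u < s
        · rw [hKapp, if_pos hus, Set.indicator_of_mem (mem_Ioo.mpr ⟨hu.1, hus⟩)]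
        · rw [hKapp, if_neg hus, Set.indicator_of_notMem (fun hc => hus (mem_Ioo.mp hc).2)]
      rw [e2, hμ, MeasureTheory.integral_indicator measurableSet_Ioo,
        Measure.restrict_restrict measurableSet_Ioo,
        inter_eq_self_of_subset_left (Ioo_subset_Ioo le_rfl hs.2.le),
        MeasureTheory.integral_const_mul,
        ← integral_Ioc_eq_integral_Ioo, ← intervalIntegral.integral_of_le hs.1.le]
    have stepB : ∫ s, (∫ u, K (s, u) ∂μ) ∂μ = ∫ u, (∫ s, K (s, u) ∂μ) ∂μ :=
      integral_integral_swap hKint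
    have stepC : ∫ u, (∫ s, K (s, u) ∂μ) ∂μ
        = Real.Gamma (1 - α) * (Real.Gamma α * ∫ u in (0:ℝ)..t, G' u) := by
      have e3 : ∫ u, (∫ s, K (s, u) ∂μ) ∂μ
          = ∫ u, (Real.Gamma (1 - α) * Real.Gamma α) * G' u ∂μ := by
        apply MeasureTheory.integral_congr_ae
        filter_upwards [ae_restrict_mem measurableSet_Ioo] with u hu
        show (∫ s, K (s, u) ∂μ) = Real.Gamma (1 - α) * Real.Gamma α * G' u
        have e4 : ∫ s, K (s, u) ∂μ = ∫ s, (Ioo u t).indicator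
            (fun s => ((t - s) ^ (α - 1) * (s - u) ^ (-α)) * G' u) s ∂μ := by
          apply MeasureTheory.integral_congr_ae
          filter_upwards [ae_restrict_mem measurableSet_Ioo] with s hs
          by_cases hus : u < s
          · rw [hKapp, if_pos hus, Set.indicator_of_mem (mem_Ioo.mpr ⟨hus, hs.2⟩)]
            ring
          · rw [hKapp, if_neg hus, Set.indicator_of_notMem (fun hc => hus (mem_Ioo.mp hc).1)]
        rw [e4, hμ, MeasureTheory.integral_indicator measurableSet_Ioo,
          Measure.restrict_restrict measurableSet_Ioo,
          inter_eq_self_of_subset_left (Ioo_subset_Ioo hu.1.le le_rfl),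
          MeasureTheory.integral_mul_const,
          ← integral_Ioc_eq_integral_Ioo, ← intervalIntegral.integral_of_le hu.2.le,
          kernel_integral hα0 hα1 hu.2]
      rw [e3, MeasureTheory.integral_const_mul, mul_assoc]
      congr 1
      rw [hμ, ← integral_Ioc_eq_integral_Ioo, ← intervalIntegral.integral_of_le htpos.le]
    rw [stepA, stepB, stepC]
  exact mul_left_cancel₀ hΓ1.ne' main

/-- Caputo tempered fractional derivative. -/
noncomputable def caputoTempered (α lam : ℝ) (y : ℝ → ℝ) (t : ℝ) : ℝ :=
  (Real.exp (-lam * t) / Real.Gamma (1 - α)) *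
    ∫ s in (0 : ℝ)..t, (t - s) ^ (-α) * deriv (fun r => Real.exp (lam * r) * y r) s

/-- a continuous solution of the tempered terminal value problem satisfies
the equivalent Volterra-type integral equation. -/
theorem terminal_value_problem_integral_equation
    (α lam a ya : ℝ) (hα0 : 0 < α) (hα1 : α < 1) (hlam : 0 ≤ lam) (ha : 0 < a)
    (f : ℝ → ℝ → ℝ) (hf : Continuous fun p : ℝ × ℝ => f p.1 p.2)
    (y : ℝ → ℝ) (hy : ContinuousOn y (Set.Icc 0 a))
    (hy' : ContDiffOn ℝ 1 (fun t => Real.exp (lam * t) * y t) (Set.Icc 0 a))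
    (heq : ∀ t ∈ Set.Icc (0 : ℝ) a, caputoTempered α lam y t = f t (y t))
    (hterm : Real.exp (lam * a) * y a = ya) :
    ∀ t ∈ Set.Icc (0 : ℝ) a,
      y t = ya * Real.exp (-lam * t) -
        (Real.exp (-lam * t) / Real.Gamma α) *
          ((∫ s in (0 : ℝ)..a, Real.exp (lam * s) * (a - s) ^ (α - 1) * f s (y s)) -
            ∫ s in (0 : ℝ)..t, Real.exp (lam * s) * (t - s) ^ (α - 1) * f s (y s)) := by
  have h1α : (0:ℝ) < 1 - α := by linarith
  have hΓ1 : 0 < Real.Gamma (1 - α) := Real.Gamma_pos_of_pos h1α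
  have hΓα : 0 < Real.Gamma α := Real.Gamma_pos_of_pos hα0
  set g : ℝ → ℝ := fun t => Real.exp (lam * t) * y t with hg
  have hgcont : ContinuousOn g (Icc 0 a) := hy'.continuousOn
  set G0 : ℝ → ℝ := derivWithin g (Icc 0 a) with hG0
  have hG0cont : ContinuousOn G0 (Icc 0 a) :=
    hy'.continuousOn_derivWithin (uniqueDiffOn_Icc ha) le_rfl
  have hderiv : ∀ s ∈ Ioo (0:ℝ) a, HasDerivAt g (G0 s) s := by
    intro s hs
    have hnhds : Icc (0:ℝ) a ∈ nhds s := Icc_mem_nhds hs.1 hs.2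
    have hca : ContDiffAt ℝ 1 g s := hy'.contDiffAt hnhds
    have hda : DifferentiableAt ℝ g s := hca.differentiableAt one_ne_zero
    have hGd : G0 s = deriv g s := derivWithin_of_mem_nhds hnhds
    rw [hGd]
    exact hda.hasDerivAt
  -- continuous extensions
  set G' : ℝ → ℝ := fun x => G0 (projIcc 0 a ha.le x) with hG'def
  have hG'cont : Continuous G' :=
    (continuousOn_iff_continuous_restrict.mp hG0cont).comp continuous_projIcc
  have hG'eq : ∀ x ∈ Icc (0:ℝ) a, G' x = G0 x := by
    intro x hx; simp only [hG'def, projIcc_of_mem ha.le hx]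
  set yext : ℝ → ℝ := fun x => y (projIcc 0 a ha.le x) with hyext
  have hyextcont : Continuous yext :=
    (continuousOn_iff_continuous_restrict.mp hy).comp continuous_projIcc
  have hyexteq : ∀ x ∈ Icc (0:ℝ) a, yext x = y x := by
    intro x hx; simp only [hyext, projIcc_of_mem ha.le hx]
  set h : ℝ → ℝ := fun s => Real.exp (lam * s) * f s (yext s) with hh
  have hhcont : Continuous h := by
    apply Continuous.mul
    · exact Real.continuous_exp.comp (continuous_const.mul continuous_id)
    · exact hf.comp (continuous_id.prodMk hyextcont)
  -- bound for G'
  obtain ⟨M, hMb⟩ := isCompact_Icc.exists_bound_of_continuousOn hG0cont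
  have hM : ∀ x, |G' x| ≤ M := by
    intro x
    rw [hG'def]
    simpa [Real.norm_eq_abs] using hMb (projIcc 0 a ha.le x) (projIcc 0 a ha.le x).2
  -- the Abel integral equation
  have habel : ∀ s ∈ Icc (0:ℝ) a,
      ∫ u in (0:ℝ)..s, (s - u) ^ (-α) * G' u = Real.Gamma (1 - α) * h s := by
    intro s hs
    have h1 : ∫ u in (0:ℝ)..s, (s - u) ^ (-α) * G' u
        = ∫ u in (0:ℝ)..s, (s - u) ^ (-α) * deriv g u := by
      apply intervalIntegral.integral_congr_ae
      have hae : ∀ᵐ x : ℝ ∂volume, x ≠ s := by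
        rw [ae_iff]
        have hset : {x : ℝ | ¬ x ≠ s} = {s} := by ext x; simp
        rw [hset]
        exact measure_singleton s
      filter_upwards [hae] with u hu hmem
      rw [uIoc_of_le hs.1] at hmem
      have hus : u < s := lt_of_le_of_ne hmem.2 hu
      have humem : u ∈ Ioo (0:ℝ) a := ⟨hmem.1, lt_of_lt_of_le hus hs.2⟩
      congr 1
      rw [hG'eq u (Ioo_subset_Icc_self humem)]
      exact derivWithin_of_mem_nhds (Icc_mem_nhds humem.1 humem.2)
    rw [h1]
    have hc := heq s hs
    rw [caputoTempered] at hc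
    apply mul_left_cancel₀
      (div_ne_zero (Real.exp_ne_zero (-lam * s)) hΓ1.ne')
    rw [hc]
    show f s (y s) = Real.exp (-lam * s) / Real.Gamma (1 - α) *
      (Real.Gamma (1 - α) * (Real.exp (lam * s) * f s (yext s)))
    rw [hyexteq s hs]
    have he : Real.exp (-lam * s) * Real.exp (lam * s) = 1 := by
      rw [← Real.exp_add, neg_mul, neg_add_cancel, Real.exp_zero]
    have h4 : Real.exp (-lam * s) / Real.Gamma (1 - α) *
        (Real.Gamma (1 - α) * (Real.exp (lam * s) * f s (y s)))
        = (Real.exp (-lam * s) * Real.exp (lam * s)) * f s (y s) := by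
      field_simp
    rw [h4, he, one_mul]
  have key := key_lemma hα0 hα1 ha G' h hG'cont hhcont M hM habel
  -- FTC
  have hFTC : ∀ t ∈ Icc (0:ℝ) a, ∫ u in (0:ℝ)..t, G' u = g t - g 0 := by
    intro t ht
    apply intervalIntegral.integral_eq_sub_of_hasDeriv_right_of_le ht.1
      (hgcont.mono (Icc_subset_Icc le_rfl ht.2))
    · intro x hx
      have hxa : x ∈ Ioo (0:ℝ) a := ⟨hx.1, lt_of_lt_of_le hx.2 ht.2⟩
      rw [hG'eq x (Ioo_subset_Icc_self hxa)]
      exact (hderiv x hxa).hasDerivWithinAt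
    · exact hG'cont.intervalIntegrable _ _
  -- final computation
  intro t ht
  have hmemA : a ∈ Icc (0:ℝ) a := ⟨ha.le, le_refl a⟩
  have hA : ∫ s in (0:ℝ)..a, Real.exp (lam * s) * (a - s) ^ (α - 1) * f s (y s)
      = Real.Gamma α * (g a - g 0) := by
    rw [← hFTC a hmemA, ← key a hmemA]
    apply intervalIntegral.integral_congr
    intro s hs
    rw [uIcc_of_le ha.le] at hs
    show Real.exp (lam * s) * (a - s) ^ (α - 1) * f s (y s)
      = (a - s) ^ (α - 1) * (Real.exp (lam * s) * f s (yext s))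
    rw [hyexteq s hs]; ring
  have hB : ∫ s in (0:ℝ)..t, Real.exp (lam * s) * (t - s) ^ (α - 1) * f s (y s)
      = Real.Gamma α * (g t - g 0) := by
    rw [← hFTC t ht, ← key t ht]
    apply intervalIntegral.integral_congr
    intro s hs
    rw [uIcc_of_le ht.1] at hs
    have hs' : s ∈ Icc (0:ℝ) a := ⟨hs.1, hs.2.trans ht.2⟩
    show Real.exp (lam * s) * (t - s) ^ (α - 1) * f s (y s)
      = (t - s) ^ (α - 1) * (Real.exp (lam * s) * f s (yext s))
    rw [hyexteq s hs']; ring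
  rw [hA, hB]
  have hga : g a = ya := hterm
  rw [hga]
  have hgt : g t = Real.exp (lam * t) * y t := rfl
  have he : Real.exp (-lam * t) * Real.exp (lam * t) = 1 := by
    rw [← Real.exp_add, neg_mul, neg_add_cancel, Real.exp_zero]
  have key2 : (Real.exp (-lam * t) / Real.Gamma α) *
      (Real.Gamma α * (ya - g 0) - Real.Gamma α * (g t - g 0))
      = Real.exp (-lam * t) * ya - y t := by
    have h3 : (Real.exp (-lam * t) / Real.Gamma α) *
        (Real.Gamma α * (ya - g 0) - Real.Gamma α * (g t - g 0))
        = Real.exp (-lam * t) * (ya - g t) := by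
      field_simp
      ring
    rw [h3, hgt, mul_sub, ← mul_assoc, he, one_mul]
  rw [key2]
  ring
end

section
/- Let 0 < α < 1, λ ≥ 0, a > 0, and let f be continuous on [0,a] × ℝ and bounded with ‖f‖ = sup |f|, set γ = 2 a^α ‖f‖ e^{λa} / Γ(1+α), and let Ω_γ = { y ∈ C([0,a]) : sup_{t∈[0,a]} |y(t) − y_a e^{-λt}| ≤ γ }. Then the operator (A y)(t) = y_a e^{-λt} − (1/Γ(α)) ∫₀ᵃ e^{-λ(t-s)} (a−s)^{α−1} f(s,y(s)) ds + (1/Γ(α)) ∫₀ᵗ e^{-λ(t-s)} (t−s)^{α−1} f(s,y(s)) ds maps Ω_γ into Ω_γ. -/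
open Real Set

open MeasureTheory intervalIntegral in
private lemma kerInt {α : ℝ} (hα : 0 < α) (t b c : ℝ) :
    IntervalIntegrable (fun s : ℝ => (t - s) ^ (α - 1)) volume b c := by
  have h := (intervalIntegral.intervalIntegrable_rpow' (a := t - b) (b := t - c)
      (show (-1:ℝ) < α - 1 by linarith)).comp_sub_left t
  simpa using h

open MeasureTheory intervalIntegral in
private lemma kerVal {α : ℝ} (hα : 0 < α) (t b c : ℝ) :
    (∫ s in b..c, (t - s) ^ (α - 1)) = ((t - b) ^ α - (t - c) ^ α) / α := by
  rw [intervalIntegral.integral_comp_sub_left (fun u : ℝ => u ^ (α - 1)) t,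
    integral_rpow (Or.inl (by linarith : (-1:ℝ) < α - 1))]
  norm_num

open MeasureTheory intervalIntegral in
private lemma kerBound {α K : ℝ} (hα : 0 < α) {h : ℝ → ℝ} {b c t : ℝ}
    (hbc : b ≤ c) (hct : c ≤ t) (hK0 : 0 ≤ K)
    (hK : ∀ s ∈ Set.Ioc b c, |h s| ≤ K) :
    |∫ s in b..c, (t - s) ^ (α - 1) * h s| ≤ K * ((t - b) ^ α - (t - c) ^ α) / α := by
  have hg : IntervalIntegrable (fun s : ℝ => (t - s) ^ (α - 1) * K) volume b c :=
    (kerInt hα t b c).mul_const K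
  have hae : ∀ᵐ s ∂(volume.restrict (Set.uIoc b c)),
      ‖(t - s) ^ (α - 1) * h s‖ ≤ (t - s) ^ (α - 1) * K := by
    refine (MeasureTheory.ae_restrict_iff' measurableSet_uIoc).mpr (MeasureTheory.ae_of_all _ ?_)
    intro s hs
    rw [Set.uIoc_of_le hbc] at hs
    have h1 : (0:ℝ) ≤ (t - s) ^ (α - 1) := Real.rpow_nonneg (by linarith [hs.2]) _
    rw [Real.norm_eq_abs, abs_mul, abs_of_nonneg h1]
    exact mul_le_mul_of_nonneg_left (hK s hs) h1
  have hb := intervalIntegral.norm_integral_le_abs_of_norm_le hae hg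
  have hval : (∫ s in b..c, (t - s) ^ (α - 1) * K) = ((t - b) ^ α - (t - c) ^ α) / α * K := by
    rw [intervalIntegral.integral_mul_const, kerVal hα]
  have hpow : (t - c) ^ α ≤ (t - b) ^ α :=
    Real.rpow_le_rpow (by linarith) (by linarith) hα.le
  rw [hval, abs_of_nonneg (mul_nonneg (div_nonneg (by linarith) hα.le) hK0)] at hb
  calc |∫ s in b..c, (t - s) ^ (α - 1) * h s| ≤ ((t - b) ^ α - (t - c) ^ α) / α * K := by
        simpa [Real.norm_eq_abs] using hb
    _ = K * ((t - b) ^ α - (t - c) ^ α) / α := by ring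

open MeasureTheory intervalIntegral in
private lemma kerDiffBound {α K : ℝ} (hα0 : 0 < α) (hα1 : α < 1) {h : ℝ → ℝ} {t1 t2 : ℝ}
    (h1 : 0 ≤ t1) (h12 : t1 ≤ t2) (hK0 : 0 ≤ K)
    (hK : ∀ s ∈ Set.Ioc (0:ℝ) t1, |h s| ≤ K) :
    |∫ s in (0:ℝ)..t1, ((t2 - s) ^ (α - 1) - (t1 - s) ^ (α - 1)) * h s|
      ≤ K * ((t1 ^ α - t2 ^ α) + (t2 - t1) ^ α) / α := by
  have hne : ∀ᵐ s : ℝ ∂volume, s ≠ t1 := by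
    rw [MeasureTheory.ae_iff]
    simp only [not_not, Set.setOf_eq_eq_singleton]
    exact measure_singleton t1
  have hI1 := kerInt hα0 t1 0 t1
  have hI2 := kerInt hα0 t2 0 t1
  have hg : IntervalIntegrable (fun s : ℝ => ((t1 - s) ^ (α - 1) - (t2 - s) ^ (α - 1)) * K)
      volume 0 t1 := (hI1.sub hI2).mul_const K
  have hae : ∀ᵐ s ∂(volume.restrict (Set.uIoc (0:ℝ) t1)),
      ‖((t2 - s) ^ (α - 1) - (t1 - s) ^ (α - 1)) * h s‖
        ≤ ((t1 - s) ^ (α - 1) - (t2 - s) ^ (α - 1)) * K := by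
    have hmem := MeasureTheory.ae_restrict_mem (μ := volume) (measurableSet_uIoc (a := (0:ℝ)) (b := t1))
    filter_upwards [hmem, MeasureTheory.ae_restrict_of_ae hne] with s hs hsne
    rw [Set.uIoc_of_le h1] at hs
    have hst1 : s < t1 := lt_of_le_of_ne hs.2 hsne
    have hle : (t2 - s) ^ (α - 1) ≤ (t1 - s) ^ (α - 1) :=
      Real.rpow_le_rpow_of_nonpos (by linarith) (by linarith) (by linarith)
    rw [Real.norm_eq_abs, abs_mul, abs_of_nonpos (by linarith), neg_sub]
    exact mul_le_mul_of_nonneg_left (hK s ⟨hs.1, hs.2⟩) (by linarith)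
  have hb := intervalIntegral.norm_integral_le_abs_of_norm_le hae hg
  have hX : (0:ℝ) ≤ ∫ s in (0:ℝ)..t1, ((t1 - s) ^ (α - 1) - (t2 - s) ^ (α - 1)) * K := by
    apply intervalIntegral.integral_nonneg_of_ae_restrict h1
    have hmem := MeasureTheory.ae_restrict_mem (μ := volume) (measurableSet_Icc (a := (0:ℝ)) (b := t1))
    filter_upwards [hmem, MeasureTheory.ae_restrict_of_ae hne] with s hs hsne
    have hst1 : s < t1 := lt_of_le_of_ne hs.2 hsne
    have hle : (t2 - s) ^ (α - 1) ≤ (t1 - s) ^ (α - 1) :=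
      Real.rpow_le_rpow_of_nonpos (by linarith) (by linarith) (by linarith)
    show (0:ℝ) ≤ ((t1 - s) ^ (α - 1) - (t2 - s) ^ (α - 1)) * K
    exact mul_nonneg (by linarith) hK0
  have hval : (∫ s in (0:ℝ)..t1, ((t1 - s) ^ (α - 1) - (t2 - s) ^ (α - 1)) * K)
      = ((t1 ^ α - t2 ^ α) + (t2 - t1) ^ α) / α * K := by
    rw [intervalIntegral.integral_mul_const, intervalIntegral.integral_sub hI1 hI2,
      kerVal hα0, kerVal hα0]
    rw [sub_zero, sub_zero, sub_self, Real.zero_rpow hα0.ne']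
    ring
  rw [hval, abs_of_nonneg (by rw [← hval]; exact hX)] at hb
  calc |∫ s in (0:ℝ)..t1, ((t2 - s) ^ (α - 1) - (t1 - s) ^ (α - 1)) * h s|
      ≤ ((t1 ^ α - t2 ^ α) + (t2 - t1) ^ α) / α * K := by simpa [Real.norm_eq_abs] using hb
    _ = K * ((t1 ^ α - t2 ^ α) + (t2 - t1) ^ α) / α := by ring

/-- The singular kernel integral `∫₀ᵗ (t-s)^{α-1} h(s) ds`. -/
noncomputable def kerG (α : ℝ) (h : ℝ → ℝ) (t : ℝ) : ℝ :=
  ∫ s in (0:ℝ)..t, (t - s) ^ (α - 1) * h s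

open MeasureTheory intervalIntegral in
private lemma kerG_holder {α K a : ℝ} (hα0 : 0 < α) (hα1 : α < 1) {h : ℝ → ℝ}
    (hhc : ContinuousOn h (Set.Icc 0 a))
    (hhb : ∀ s ∈ Set.Icc (0:ℝ) a, |h s| ≤ K) (hK0 : 0 ≤ K)
    {t1 t2 : ℝ} (ht1 : t1 ∈ Set.Icc (0:ℝ) a) (ht2 : t2 ∈ Set.Icc (0:ℝ) a) (h12 : t1 ≤ t2) :
    |kerG α h t2 - kerG α h t1| ≤ (2 * K / α) * (t2 - t1) ^ α := by
  have hI1 : IntervalIntegrable (fun s => (t2 - s) ^ (α - 1) * h s) volume 0 t1 :=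
    (kerInt hα0 t2 0 t1).mul_continuousOn (hhc.mono (by
      rw [Set.uIcc_of_le ht1.1]; exact Set.Icc_subset_Icc le_rfl ht1.2))
  have hI1' : IntervalIntegrable (fun s => (t1 - s) ^ (α - 1) * h s) volume 0 t1 :=
    (kerInt hα0 t1 0 t1).mul_continuousOn (hhc.mono (by
      rw [Set.uIcc_of_le ht1.1]; exact Set.Icc_subset_Icc le_rfl ht1.2))
  have hI2 : IntervalIntegrable (fun s => (t2 - s) ^ (α - 1) * h s) volume t1 t2 :=
    (kerInt hα0 t2 t1 t2).mul_continuousOn (hhc.mono (by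
      rw [Set.uIcc_of_le h12]; exact Set.Icc_subset_Icc ht1.1 ht2.2))
  have hsplit : kerG α h t2 = (∫ s in (0:ℝ)..t1, (t2 - s) ^ (α - 1) * h s)
      + ∫ s in t1..t2, (t2 - s) ^ (α - 1) * h s :=
    (intervalIntegral.integral_add_adjacent_intervals hI1 hI2).symm
  have hdiff : (∫ s in (0:ℝ)..t1, (t2 - s) ^ (α - 1) * h s) - kerG α h t1
      = ∫ s in (0:ℝ)..t1, ((t2 - s) ^ (α - 1) - (t1 - s) ^ (α - 1)) * h s := by
    rw [kerG, ← intervalIntegral.integral_sub hI1 hI1']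
    apply intervalIntegral.integral_congr
    intro s _
    ring
  have hb1 := kerDiffBound hα0 hα1 ht1.1 h12 hK0
    (fun s hs => hhb s ⟨hs.1.le, hs.2.trans ht1.2⟩)
  have hb2 := kerBound hα0 h12 (le_refl t2) hK0
    (fun s hs => hhb s ⟨ht1.1.trans hs.1.le, hs.2.trans ht2.2⟩)
  rw [sub_self, Real.zero_rpow hα0.ne', sub_zero] at hb2
  have hpow : t1 ^ α ≤ t2 ^ α := Real.rpow_le_rpow ht1.1 h12 hα0.le
  have hd0 : (0:ℝ) ≤ (t2 - t1) ^ α := Real.rpow_nonneg (by linarith) _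
  calc |kerG α h t2 - kerG α h t1|
      = |(∫ s in (0:ℝ)..t1, ((t2 - s) ^ (α - 1) - (t1 - s) ^ (α - 1)) * h s)
          + ∫ s in t1..t2, (t2 - s) ^ (α - 1) * h s| := by
        rw [hsplit, ← hdiff]; congr 1; ring
    _ ≤ |∫ s in (0:ℝ)..t1, ((t2 - s) ^ (α - 1) - (t1 - s) ^ (α - 1)) * h s|
          + |∫ s in t1..t2, (t2 - s) ^ (α - 1) * h s| := abs_add_le _ _
    _ ≤ K * ((t1 ^ α - t2 ^ α) + (t2 - t1) ^ α) / α + K * (t2 - t1) ^ α / α := by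
        exact add_le_add hb1 hb2
    _ ≤ K * (t2 - t1) ^ α / α + K * (t2 - t1) ^ α / α := by
        gcongr
        linarith
    _ = (2 * K / α) * (t2 - t1) ^ α := by ring

open MeasureTheory intervalIntegral in
private lemma kerG_continuousOn {α K a : ℝ} (hα0 : 0 < α) (hα1 : α < 1) {h : ℝ → ℝ}
    (hhc : ContinuousOn h (Set.Icc 0 a))
    (hhb : ∀ s ∈ Set.Icc (0:ℝ) a, |h s| ≤ K) (hK0 : 0 ≤ K) :
    ContinuousOn (kerG α h) (Set.Icc 0 a) := by
  intro t ht
  rw [Metric.continuousWithinAt_iff]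
  intro ε hε
  set C : ℝ := 2 * K / α + 1 with hC
  have hC0 : (0:ℝ) < C := by positivity
  refine ⟨(ε / C) ^ α⁻¹, Real.rpow_pos_of_pos (by positivity) _, fun t' ht' hd => ?_⟩
  have hb : |kerG α h t' - kerG α h t| ≤ (2 * K / α) * |t' - t| ^ α := by
    rcases le_total t t' with hc | hc
    · have := kerG_holder hα0 hα1 hhc hhb hK0 ht ht' hc
      rwa [abs_of_nonneg (sub_nonneg.2 hc)]
    · have := kerG_holder hα0 hα1 hhc hhb hK0 ht' ht hc
      rw [abs_sub_comm, abs_sub_comm t' t]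
      rwa [abs_of_nonneg (sub_nonneg.2 hc)]
  rw [Real.dist_eq]
  have h1 : |t' - t| ^ α < ε / C := by
    calc |t' - t| ^ α < ((ε / C) ^ α⁻¹) ^ α :=
          Real.rpow_lt_rpow (abs_nonneg _) (by rw [← Real.dist_eq]; exact hd) hα0
      _ = ε / C := Real.rpow_inv_rpow (by positivity) hα0.ne'
  have h2 : (0:ℝ) ≤ 2 * K / α := by positivity
  have h3 : (0:ℝ) ≤ |t' - t| ^ α := Real.rpow_nonneg (abs_nonneg _) _
  have h4 : (2 * K / α) * |t' - t| ^ α < C * (ε / C) := by nlinarith [div_pos hε hC0]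
  have h5 : C * (ε / C) = ε := by field_simp
  calc |kerG α h t' - kerG α h t| ≤ (2 * K / α) * |t' - t| ^ α := hb
    _ < C * (ε / C) := h4
    _ = ε := h5

/-- The shooting operator A for the tempered terminal value problem. -/
noncomputable def shootOp (α lam a ya : ℝ) (f : ℝ → ℝ → ℝ) (y : ℝ → ℝ) (t : ℝ) : ℝ :=
  ya * Real.exp (-lam * t) -
    (1 / Real.Gamma α) *
      (∫ s in (0 : ℝ)..a, Real.exp (-lam * (t - s)) * (a - s) ^ (α - 1) * f s (y s)) +
    (1 / Real.Gamma α) *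
      ∫ s in (0 : ℝ)..t, Real.exp (-lam * (t - s)) * (t - s) ^ (α - 1) * f s (y s)

/-- with γ = 2 a^α ‖f‖ e^{λa} / Γ(1+α), the operator A maps Ω_γ into Ω_γ. -/
theorem shootOp_maps_ball_to_ball
    (α lam a ya M : ℝ) (hα0 : 0 < α) (hα1 : α < 1) (hlam : 0 ≤ lam) (ha : 0 < a)
    (f : ℝ → ℝ → ℝ) (hf : Continuous fun p : ℝ × ℝ => f p.1 p.2)
    (hM : ∀ t ∈ Set.Icc (0 : ℝ) a, ∀ u : ℝ, |f t u| ≤ M)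
    (y : ℝ → ℝ) (hy : ContinuousOn y (Set.Icc 0 a))
    (hyγ : ∀ t ∈ Set.Icc (0 : ℝ) a,
      |y t - ya * Real.exp (-lam * t)| ≤ 2 * a ^ α * M * Real.exp (lam * a) / Real.Gamma (1 + α)) :
    ContinuousOn (shootOp α lam a ya f y) (Set.Icc 0 a) ∧
      ∀ t ∈ Set.Icc (0 : ℝ) a,
        |shootOp α lam a ya f y t - ya * Real.exp (-lam * t)| ≤
          2 * a ^ α * M * Real.exp (lam * a) / Real.Gamma (1 + α) := by
  have hΓ : 0 < Real.Gamma α := Real.Gamma_pos_of_pos hα0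
  have hM0 : 0 ≤ M := le_trans (abs_nonneg _) (hM 0 ⟨le_refl 0, ha.le⟩ 0)
  set K : ℝ := Real.exp (lam * a) * M with hKdef
  have hK0 : 0 ≤ K := mul_nonneg (Real.exp_pos _).le hM0
  set h : ℝ → ℝ := fun s => Real.exp (lam * s) * f s (y s) with hhdef
  have hhb : ∀ s ∈ Set.Icc (0:ℝ) a, |h s| ≤ K := by
    intro s hs
    rw [hhdef, hKdef]
    show |Real.exp (lam * s) * f s (y s)| ≤ _
    rw [abs_mul, abs_of_pos (Real.exp_pos _)]
    exact mul_le_mul (Real.exp_le_exp.mpr (mul_le_mul_of_nonneg_left hs.2 hlam))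
      (hM s hs (y s)) (abs_nonneg _) (Real.exp_pos _).le
  have hhc : ContinuousOn h (Set.Icc 0 a) := by
    apply ContinuousOn.mul
    · exact (Real.continuous_exp.comp (continuous_const.mul continuous_id)).continuousOn
    · exact hf.comp_continuousOn (continuousOn_id.prodMk hy)
  have key : ∀ t c : ℝ,
      (∫ s in (0:ℝ)..c, Real.exp (-lam * (t - s)) * (c - s) ^ (α - 1) * f s (y s))
        = Real.exp (-lam * t) * kerG α h c := by
    intro t c
    rw [kerG, ← intervalIntegral.integral_const_mul]
    apply intervalIntegral.integral_congr
    intro s _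
    show Real.exp (-lam * (t - s)) * (c - s) ^ (α - 1) * f s (y s)
        = Real.exp (-lam * t) * ((c - s) ^ (α - 1) * (Real.exp (lam * s) * f s (y s)))
    rw [show -lam * (t - s) = -lam * t + lam * s by ring, Real.exp_add]
    ring
  have hrep : ∀ t : ℝ, shootOp α lam a ya f y t
      = ya * Real.exp (-lam * t)
        + 1 / Real.Gamma α * (Real.exp (-lam * t) * (kerG α h t - kerG α h a)) := by
    intro t
    rw [shootOp, key t a, key t t]
    ring
  have hGb : ∀ t ∈ Set.Icc (0:ℝ) a, |kerG α h t| ≤ K * a ^ α / α := by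
    intro t ht
    have := kerBound hα0 ht.1 (le_refl t) hK0
      (fun s hs => hhb s ⟨hs.1.le, hs.2.trans ht.2⟩)
    rw [sub_zero, sub_self, Real.zero_rpow hα0.ne', sub_zero] at this
    refine le_trans this ?_
    have h0t := ht.1
    have hta := ht.2
    gcongr
  constructor
  · have hcontE : ContinuousOn (fun t => ya * Real.exp (-lam * t)
        + 1 / Real.Gamma α * (Real.exp (-lam * t) * (kerG α h t - kerG α h a)))
        (Set.Icc 0 a) := by
      apply ContinuousOn.add
      · exact (continuous_const.mul
          (Real.continuous_exp.comp (continuous_const.mul continuous_id))).continuousOn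
      · exact continuousOn_const.mul
          (((Real.continuous_exp.comp (continuous_const.mul continuous_id)).continuousOn).mul
            ((kerG_continuousOn hα0 hα1 hhc hhb hK0).sub continuousOn_const))
    exact hcontE.congr fun t ht => hrep t
  · intro t ht
    rw [hrep t, add_sub_cancel_left]
    have hD : |kerG α h t - kerG α h a| ≤ 2 * K * a ^ α / α := by
      calc |kerG α h t - kerG α h a| ≤ |kerG α h t| + |kerG α h a| := abs_sub _ _
        _ ≤ K * a ^ α / α + K * a ^ α / α :=
            add_le_add (hGb t ht) (hGb a ⟨ha.le, le_refl a⟩)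
        _ = 2 * K * a ^ α / α := by ring
    have hexp : Real.exp (-lam * t) ≤ 1 := by
      rw [Real.exp_le_one_iff]
      nlinarith [ht.1]
    have hRHS : 2 * a ^ α * M * Real.exp (lam * a) / Real.Gamma (1 + α)
        = 1 / Real.Gamma α * (2 * K * a ^ α / α) := by
      rw [show (1:ℝ) + α = α + 1 by ring, Real.Gamma_add_one hα0.ne', hKdef]
      field_simp
    rw [hRHS]
    calc |1 / Real.Gamma α * (Real.exp (-lam * t) * (kerG α h t - kerG α h a))|
        = 1 / Real.Gamma α * (Real.exp (-lam * t) * |kerG α h t - kerG α h a|) := by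
          rw [abs_mul, abs_mul, abs_of_pos (Real.exp_pos _), abs_of_pos (by positivity)]
      _ ≤ 1 / Real.Gamma α * (1 * (2 * K * a ^ α / α)) := by
          gcongr
      _ = 1 / Real.Gamma α * (2 * K * a ^ α / α) := by ring
end

section
/- Let 0 < α < 1, λ ≥ 0, a > 0, and let f : [0,a] × ℝ → ℝ be continuous, bounded, and Lipschitz in the second variable with constant L satisfying L < Γ(α+1)/(2 a^α e^{λa}). Then for all y, z ∈ Ω_γ, the operator A defined by (A y)(t) = y_a e^{-λt} − (1/Γ(α)) ∫₀ᵃ e^{-λ(t-s)} (a−s)^{α−1} f(s,y(s)) ds + (1/Γ(α)) ∫₀ᵗ e^{-λ(t-s)} (t−s)^{α−1} f(s,y(s)) ds satisfies sup_{t∈[0,a]} |(Ay)(t) − (Az)(t)| ≤ (2 L a^α e^{λa}/Γ(1+α)) · sup_{t∈[0,a]} |y(t) − z(t)|, and in particular A is a contraction on Ω_γ. -/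
open Real Set intervalIntegral

lemma rpow_int_aux {α : ℝ} (hα0 : 0 < α) (b : ℝ) (hb : 0 ≤ b) :
    IntervalIntegrable (fun s => (b - s) ^ (α - 1)) MeasureTheory.volume 0 b := by
  have base : IntervalIntegrable (fun x : ℝ => x ^ (α - 1)) MeasureTheory.volume 0 b :=
    intervalIntegral.intervalIntegrable_rpow' (by linarith)
  have := (base.comp_sub_left b).symm
  simpa using this

lemma integrable_aux {α : ℝ} (lam t b : ℝ) (hα0 : 0 < α) (hb : 0 ≤ b) (g : ℝ → ℝ)
    (hg : ContinuousOn g (Icc 0 b)) :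
    IntervalIntegrable (fun s => Real.exp (-lam * (t - s)) * (b - s) ^ (α - 1) * g s)
      MeasureTheory.volume 0 b := by
  have heq : (fun s => Real.exp (-lam * (t - s)) * (b - s) ^ (α - 1) * g s)
      = fun s => (b - s) ^ (α - 1) * (Real.exp (-lam * (t - s)) * g s) := by
    funext s; ring
  rw [heq]
  apply (rpow_int_aux hα0 b hb).mul_continuousOn
  rw [Set.uIcc_of_le hb]
  exact ((Real.continuous_exp.comp (by continuity)).continuousOn).mul hg

lemma integral_rpow_aux {α : ℝ} (hα0 : 0 < α) (b : ℝ) :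
    ∫ s in (0:ℝ)..b, (b - s) ^ (α - 1) = b ^ α / α := by
  have h1 : ∫ s in (0:ℝ)..b, (b - s) ^ (α - 1) = ∫ x in (0:ℝ)..b, x ^ (α - 1) := by
    have := intervalIntegral.integral_comp_sub_left (a := 0) (b := b)
      (fun x : ℝ => x ^ (α - 1)) b
    simpa using this
  rw [h1, integral_rpow (Or.inl (by linarith))]
  rw [sub_add_cancel, Real.zero_rpow hα0.ne']
  ring

lemma bound_aux {α : ℝ} (lam a t b C : ℝ) (hα0 : 0 < α) (hlam : 0 ≤ lam)
    (hb : 0 ≤ b) (hba : b ≤ a) (ht : t ∈ Icc (0:ℝ) a) (hC : 0 ≤ C) (g : ℝ → ℝ)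
    (hg : ContinuousOn g (Icc 0 b)) (hgC : ∀ s ∈ Ioc (0:ℝ) b, |g s| ≤ C) :
    |∫ s in (0:ℝ)..b, Real.exp (-lam * (t - s)) * (b - s) ^ (α - 1) * g s|
      ≤ Real.exp (lam * a) * C * (b ^ α / α) := by
  have hbi : IntervalIntegrable (fun s => Real.exp (lam * a) * C * (b - s) ^ (α - 1))
      MeasureTheory.volume 0 b := (rpow_int_aux hα0 b hb).const_mul _
  have hpt : ∀ s ∈ Set.uIoc (0:ℝ) b,
      ‖Real.exp (-lam * (t - s)) * (b - s) ^ (α - 1) * g s‖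
        ≤ Real.exp (lam * a) * C * (b - s) ^ (α - 1) := by
    intro s hs
    rw [Set.uIoc_of_le hb] at hs
    have hp : (0:ℝ) ≤ (b - s) ^ (α - 1) := Real.rpow_nonneg (by linarith [hs.2]) _
    have he : Real.exp (-lam * (t - s)) ≤ Real.exp (lam * a) := by
      apply Real.exp_le_exp.2
      nlinarith [ht.1, ht.2, hs.1, hs.2]
    have hgs := hgC s hs
    have hga : (0:ℝ) ≤ |g s| := abs_nonneg _
    have hepos := Real.exp_pos (-lam * (t - s))
    rw [Real.norm_eq_abs, abs_mul, abs_mul, abs_of_pos hepos, abs_of_nonneg hp]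
    have h2 : Real.exp (-lam * (t - s)) * |g s| ≤ Real.exp (lam * a) * C :=
      mul_le_mul he hgs hga (Real.exp_pos _).le
    calc Real.exp (-lam * (t - s)) * (b - s) ^ (α - 1) * |g s|
        = Real.exp (-lam * (t - s)) * |g s| * (b - s) ^ (α - 1) := by ring
      _ ≤ Real.exp (lam * a) * C * (b - s) ^ (α - 1) := mul_le_mul_of_nonneg_right h2 hp
  have h1 := intervalIntegral.norm_integral_le_abs_of_norm_le
    ((MeasureTheory.ae_restrict_iff' measurableSet_uIoc).2 (Filter.Eventually.of_forall hpt)) hbi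
  have hval : ∫ s in (0:ℝ)..b, Real.exp (lam * a) * C * (b - s) ^ (α - 1)
      = Real.exp (lam * a) * C * (b ^ α / α) := by
    rw [intervalIntegral.integral_const_mul, integral_rpow_aux hα0]
  rw [hval] at h1
  have hnn : 0 ≤ Real.exp (lam * a) * C * (b ^ α / α) := by
    have : (0:ℝ) ≤ b ^ α := Real.rpow_nonneg hb _
    positivity
  rw [Real.norm_eq_abs] at h1
  calc |∫ s in (0:ℝ)..b, Real.exp (-lam * (t - s)) * (b - s) ^ (α - 1) * g s|
      ≤ |Real.exp (lam * a) * C * (b ^ α / α)| := h1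
    _ = Real.exp (lam * a) * C * (b ^ α / α) := abs_of_nonneg hnn

/-- A is a contraction on Ω_γ with contraction factor
2 L a^α e^{λa}/Γ(1+α) < 1. -/
theorem shootOp_contraction
    (α lam a ya M L : ℝ) (hα0 : 0 < α) (hα1 : α < 1) (hlam : 0 ≤ lam) (ha : 0 < a)
    (f : ℝ → ℝ → ℝ) (hf : Continuous fun p : ℝ × ℝ => f p.1 p.2)
    (hM : ∀ t ∈ Set.Icc (0 : ℝ) a, ∀ u : ℝ, |f t u| ≤ M)
    (hL : ∀ t ∈ Set.Icc (0 : ℝ) a, ∀ u v : ℝ, |f t u - f t v| ≤ L * |u - v|)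
    (hLsmall : L < Real.Gamma (α + 1) / (2 * a ^ α * Real.exp (lam * a)))
    (y z : ℝ → ℝ) (hy : ContinuousOn y (Set.Icc 0 a)) (hz : ContinuousOn z (Set.Icc 0 a))
    (hyγ : ∀ t ∈ Set.Icc (0 : ℝ) a,
      |y t - ya * Real.exp (-lam * t)| ≤ 2 * a ^ α * M * Real.exp (lam * a) / Real.Gamma (1 + α))
    (hzγ : ∀ t ∈ Set.Icc (0 : ℝ) a,
      |z t - ya * Real.exp (-lam * t)| ≤ 2 * a ^ α * M * Real.exp (lam * a) / Real.Gamma (1 + α)) :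
    (∀ t ∈ Set.Icc (0 : ℝ) a,
        |shootOp α lam a ya f y t - shootOp α lam a ya f z t| ≤
          (2 * L * a ^ α * Real.exp (lam * a) / Real.Gamma (1 + α)) *
            sSup ((fun s => |y s - z s|) '' Set.Icc (0 : ℝ) a)) ∧
      2 * L * a ^ α * Real.exp (lam * a) / Real.Gamma (1 + α) < 1 := by
  have hΓpos : 0 < Real.Gamma α := Real.Gamma_pos_of_pos hα0
  have hΓ1 : Real.Gamma (1 + α) = α * Real.Gamma α := by
    rw [add_comm, Real.Gamma_add_one hα0.ne']
  have hΓ1pos : 0 < Real.Gamma (1 + α) := by rw [hΓ1]; positivity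
  have haα : 0 < a ^ α := Real.rpow_pos_of_pos ha α
  have hE : (0:ℝ) < Real.exp (lam * a) := Real.exp_pos _
  have hL0 : 0 ≤ L := by
    have := hL 0 ⟨le_refl 0, ha.le⟩ 1 0
    simpa using (abs_nonneg (f 0 1 - f 0 0)).trans this
  constructor
  · intro t ht
    set S := sSup ((fun s => |y s - z s|) '' Set.Icc (0 : ℝ) a) with hSdef
    have hbdd : BddAbove ((fun s => |y s - z s|) '' Set.Icc (0 : ℝ) a) :=
      (isCompact_Icc.image_of_continuousOn ((hy.sub hz).abs)).bddAbove
    have hSle : ∀ s ∈ Set.Icc (0:ℝ) a, |y s - z s| ≤ S := fun s hs =>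
      le_csSup hbdd ⟨s, hs, rfl⟩
    have hS0 : 0 ≤ S := (abs_nonneg _).trans (hSle 0 ⟨le_refl 0, ha.le⟩)
    set g : ℝ → ℝ := fun s => f s (y s) - f s (z s) with hgdef
    have hgc : ContinuousOn g (Set.Icc 0 a) := by
      apply ContinuousOn.sub
      · exact hf.comp_continuousOn (continuousOn_id.prodMk hy)
      · exact hf.comp_continuousOn (continuousOn_id.prodMk hz)
    have hgycont : ContinuousOn (fun s => f s (y s)) (Set.Icc 0 a) :=
      hf.comp_continuousOn (continuousOn_id.prodMk hy)
    have hgzcont : ContinuousOn (fun s => f s (z s)) (Set.Icc 0 a) :=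
      hf.comp_continuousOn (continuousOn_id.prodMk hz)
    -- difference of integrals over 0..b
    have key : ∀ b : ℝ, 0 ≤ b → b ≤ a →
        (∫ s in (0:ℝ)..b, Real.exp (-lam * (t - s)) * (b - s) ^ (α - 1) * f s (y s)) -
          (∫ s in (0:ℝ)..b, Real.exp (-lam * (t - s)) * (b - s) ^ (α - 1) * f s (z s))
        = ∫ s in (0:ℝ)..b, Real.exp (-lam * (t - s)) * (b - s) ^ (α - 1) * g s := by
      intro b hb0 hba
      have hsub : Set.Icc (0:ℝ) b ⊆ Set.Icc 0 a := Set.Icc_subset_Icc le_rfl hba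
      rw [← intervalIntegral.integral_sub
        (integrable_aux lam t b hα0 hb0 _ (hgycont.mono hsub))
        (integrable_aux lam t b hα0 hb0 _ (hgzcont.mono hsub))]
      apply intervalIntegral.integral_congr
      intro s _
      simp only [hgdef]; ring
    have hbnd : ∀ b : ℝ, 0 ≤ b → b ≤ a →
        |∫ s in (0:ℝ)..b, Real.exp (-lam * (t - s)) * (b - s) ^ (α - 1) * g s|
          ≤ Real.exp (lam * a) * (L * S) * (b ^ α / α) := by
      intro b hb0 hba
      apply bound_aux lam a t b (L * S) hα0 hlam hb0 hba ht (by positivity)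
      · exact hgc.mono (Set.Icc_subset_Icc le_rfl hba)
      · intro s hs
        have hsmem : s ∈ Set.Icc (0:ℝ) a := ⟨hs.1.le, hs.2.trans hba⟩
        calc |g s| ≤ L * |y s - z s| := hL s hsmem _ _
          _ ≤ L * S := mul_le_mul_of_nonneg_left (hSle s hsmem) hL0
    have hDa := hbnd a ha.le le_rfl
    have hDt' := hbnd t ht.1 ht.2
    have htα : t ^ α ≤ a ^ α := Real.rpow_le_rpow ht.1 ht.2 hα0.le
    have hDt : |∫ s in (0:ℝ)..t, Real.exp (-lam * (t - s)) * (t - s) ^ (α - 1) * g s|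
        ≤ Real.exp (lam * a) * (L * S) * (a ^ α / α) := by
      refine hDt'.trans ?_
      have h2 : t ^ α / α ≤ a ^ α / α := by gcongr
      exact mul_le_mul_of_nonneg_left h2 (by positivity)
    have hdiff : shootOp α lam a ya f y t - shootOp α lam a ya f z t
        = (1 / Real.Gamma α) *
            (∫ s in (0:ℝ)..t, Real.exp (-lam * (t - s)) * (t - s) ^ (α - 1) * g s) -
          (1 / Real.Gamma α) *
            (∫ s in (0:ℝ)..a, Real.exp (-lam * (t - s)) * (a - s) ^ (α - 1) * g s) := by
      unfold shootOp
      rw [← key a ha.le le_rfl, ← key t ht.1 ht.2]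
      ring
    have habs : ∀ x u : ℝ, |x - u| ≤ |x| + |u| := fun x u => by
      rw [sub_eq_add_neg]; exact (abs_add_le _ _).trans (by rw [abs_neg])
    have hΓinv : (0:ℝ) < 1 / Real.Gamma α := by positivity
    calc |shootOp α lam a ya f y t - shootOp α lam a ya f z t|
        = |(1 / Real.Gamma α) *
            (∫ s in (0:ℝ)..t, Real.exp (-lam * (t - s)) * (t - s) ^ (α - 1) * g s) -
          (1 / Real.Gamma α) *
            (∫ s in (0:ℝ)..a, Real.exp (-lam * (t - s)) * (a - s) ^ (α - 1) * g s)| := by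
          rw [hdiff]
      _ ≤ |(1 / Real.Gamma α) *
            (∫ s in (0:ℝ)..t, Real.exp (-lam * (t - s)) * (t - s) ^ (α - 1) * g s)| +
          |(1 / Real.Gamma α) *
            (∫ s in (0:ℝ)..a, Real.exp (-lam * (t - s)) * (a - s) ^ (α - 1) * g s)| :=
          habs _ _
      _ = (1 / Real.Gamma α) *
            |∫ s in (0:ℝ)..t, Real.exp (-lam * (t - s)) * (t - s) ^ (α - 1) * g s| +
          (1 / Real.Gamma α) *
            |∫ s in (0:ℝ)..a, Real.exp (-lam * (t - s)) * (a - s) ^ (α - 1) * g s| := by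
          rw [abs_mul, abs_mul, abs_of_pos hΓinv]
      _ ≤ (1 / Real.Gamma α) * (Real.exp (lam * a) * (L * S) * (a ^ α / α)) +
          (1 / Real.Gamma α) * (Real.exp (lam * a) * (L * S) * (a ^ α / α)) :=
          add_le_add (mul_le_mul_of_nonneg_left hDt hΓinv.le)
            (mul_le_mul_of_nonneg_left hDa hΓinv.le)
      _ = 2 * L * a ^ α * Real.exp (lam * a) / Real.Gamma (1 + α) * S := by
          rw [hΓ1]; field_simp; ring
  · rw [div_lt_one hΓ1pos]
    have h1 := (lt_div_iff₀ (by positivity : (0:ℝ) < 2 * a ^ α * Real.exp (lam * a))).1 hLsmall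
    rw [add_comm α 1] at h1
    nlinarith
end

section
/- Let 0 < α < 1, λ ≥ 0, a > 0, and let f : [0,a] × ℝ → ℝ be continuous, bounded, and Lipschitz in the second variable with constant L < Γ(α+1)/(2 a^α e^{λa}). Then the integral equation y(t) = y_a e^{-λt} − (e^{-λt}/Γ(α))[∫₀ᵃ e^{λs}(a−s)^{α−1} f(s,y(s)) ds − ∫₀ᵗ e^{λs}(t−s)^{α−1} f(s,y(s)) ds] has a unique continuous solution y* in Ω_γ. -/
open Real Set

namespace TVPaux

open Real Set MeasureTheory intervalIntegral

variable {α : ℝ}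

lemma ker_intble (hα0 : 0 < α) (c u v : ℝ) :
    IntervalIntegrable (fun s => (c - s) ^ (α - 1)) volume u v := by
  have h := intervalIntegrable_rpow' (show (-1:ℝ) < α - 1 by linarith) (a := c - u) (b := c - v)
  simpa using h.comp_sub_left c

lemma kermul_intble (hα0 : 0 < α) (c u v : ℝ) {h : ℝ → ℝ} (hh : Continuous h) :
    IntervalIntegrable (fun s => (c - s) ^ (α - 1) * h s) volume u v :=
  (ker_intble hα0 c u v).mul_continuousOn hh.continuousOn

lemma ker_integral' (hα0 : 0 < α) (u v w : ℝ) :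
    ∫ s in u..v, (w - s) ^ (α - 1) = ((w - u) ^ α - (w - v) ^ α) / α := by
  rw [intervalIntegral.integral_comp_sub_left (fun x => x ^ (α - 1)) w,
    integral_rpow (Or.inl (by linarith : (-1:ℝ) < α - 1))]
  have h1 : α - 1 + 1 = α := by ring
  rw [h1]

lemma ker_integral (hα0 : 0 < α) (u v : ℝ) :
    ∫ s in u..v, (v - s) ^ (α - 1) = (v - u) ^ α / α := by
  rw [ker_integral' hα0 u v v, sub_self, Real.zero_rpow hα0.ne', sub_zero]

lemma ker_bound (hα0 : 0 < α) {h : ℝ → ℝ} (hh : Continuous h) {C u v : ℝ}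
    (huv : u ≤ v) (hC : ∀ s ∈ Icc u v, |h s| ≤ C) :
    |∫ s in u..v, (v - s) ^ (α - 1) * h s| ≤ C * (v - u) ^ α / α := by
  have hint := kermul_intble hα0 v u v hh
  have h1 : |∫ s in u..v, (v - s) ^ (α - 1) * h s| ≤ ∫ s in u..v, |(v - s) ^ (α - 1)| * |h s| := by
    have := intervalIntegral.norm_integral_le_integral_norm
      (f := fun s => (v - s) ^ (α - 1) * h s) (μ := volume) huv
    simpa [Real.norm_eq_abs] using this
  have h2 : (∫ s in u..v, |(v - s) ^ (α - 1)| * |h s|) ≤ ∫ s in u..v, C * (v - s) ^ (α - 1) := by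
    apply intervalIntegral.integral_mono_on huv ((ker_intble hα0 v u v).abs.mul_continuousOn hh.abs.continuousOn)
      ((ker_intble hα0 v u v).const_mul C)
    intro s hs
    rw [abs_of_nonneg (rpow_nonneg (by linarith [hs.2] : (0:ℝ) ≤ v - s) _)]
    rw [mul_comm C _]
    exact mul_le_mul_of_nonneg_left (hC s hs) (rpow_nonneg (by linarith [hs.2]) _)
  have h3 : (∫ s in u..v, C * (v - s) ^ (α - 1)) = C * (v - u) ^ α / α := by
    rw [intervalIntegral.integral_const_mul, ker_integral hα0 u v]
    ring
  linarith

lemma Phi_holder (hα0 : 0 < α) (hα1 : α < 1) {h : ℝ → ℝ} (hh : Continuous h) {C t₁ t₂ : ℝ}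
    (h0 : 0 ≤ t₁) (h12 : t₁ ≤ t₂) (hC : ∀ s ∈ Icc (0:ℝ) t₂, |h s| ≤ C) :
    |(∫ s in (0:ℝ)..t₂, (t₂ - s) ^ (α - 1) * h s) -
      ∫ s in (0:ℝ)..t₁, (t₁ - s) ^ (α - 1) * h s| ≤ 2 * C * (t₂ - t₁) ^ α / α := by
  have h02 : (0:ℝ) ≤ t₂ := h0.trans h12
  have hC0 : 0 ≤ C := (abs_nonneg _).trans (hC 0 ⟨le_rfl, h02⟩)
  have i1 : IntervalIntegrable (fun s => (t₂ - s) ^ (α - 1) * h s) volume 0 t₁ :=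
    kermul_intble hα0 t₂ 0 t₁ hh
  have i2 : IntervalIntegrable (fun s => (t₂ - s) ^ (α - 1) * h s) volume t₁ t₂ :=
    kermul_intble hα0 t₂ t₁ t₂ hh
  have i3 : IntervalIntegrable (fun s => (t₁ - s) ^ (α - 1) * h s) volume 0 t₁ :=
    kermul_intble hα0 t₁ 0 t₁ hh
  have split : (∫ s in (0:ℝ)..t₁, (t₂ - s) ^ (α - 1) * h s) +
      (∫ s in t₁..t₂, (t₂ - s) ^ (α - 1) * h s) = ∫ s in (0:ℝ)..t₂, (t₂ - s) ^ (α - 1) * h s :=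
    intervalIntegral.integral_add_adjacent_intervals i1 i2
  have hB : |∫ s in t₁..t₂, (t₂ - s) ^ (α - 1) * h s| ≤ C * (t₂ - t₁) ^ α / α :=
    ker_bound hα0 hh h12 (fun s hs => hC s ⟨h0.trans hs.1, hs.2⟩)
  -- bound for the first piece
  have hne : ∀ᵐ s : ℝ, s ≠ t₁ := by
    have : (volume : Measure ℝ) {t₁} = 0 := measure_singleton t₁
    rw [← MeasureTheory.compl_mem_ae_iff] at this
    exact this
  have hA1 : |∫ s in (0:ℝ)..t₁, ((t₂ - s) ^ (α - 1) * h s - (t₁ - s) ^ (α - 1) * h s)| ≤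
      ∫ s in (0:ℝ)..t₁, |(t₂ - s) ^ (α - 1) * h s - (t₁ - s) ^ (α - 1) * h s| := by
    have := intervalIntegral.norm_integral_le_integral_norm
      (f := fun s => (t₂ - s) ^ (α - 1) * h s - (t₁ - s) ^ (α - 1) * h s) (μ := volume) h0
    simpa [Real.norm_eq_abs] using this
  have hA2 : (∫ s in (0:ℝ)..t₁, |(t₂ - s) ^ (α - 1) * h s - (t₁ - s) ^ (α - 1) * h s|) ≤
      ∫ s in (0:ℝ)..t₁, C * ((t₁ - s) ^ (α - 1) - (t₂ - s) ^ (α - 1)) := by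
    apply intervalIntegral.integral_mono_ae_restrict h0 (i1.sub i3).abs
      (((ker_intble hα0 t₁ 0 t₁).sub (ker_intble hα0 t₂ 0 t₁)).const_mul C)
    filter_upwards [MeasureTheory.ae_restrict_mem measurableSet_Icc,
      hne.filter_mono (MeasureTheory.ae_mono Measure.restrict_le_self)] with s hs hsne
    have hs1 : s < t₁ := lt_of_le_of_ne hs.2 hsne
    have e0 : (0:ℝ) < t₁ - s := by linarith
    have e1 : (t₂ - s) ^ (α - 1) ≤ (t₁ - s) ^ (α - 1) :=
      Real.rpow_le_rpow_of_nonpos e0 (by linarith) (by linarith)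
    have e2 : (0:ℝ) ≤ (t₂ - s) ^ (α - 1) := Real.rpow_nonneg (by linarith) _
    have e3 : |h s| ≤ C := hC s ⟨hs.1, by linarith⟩
    have e4 : (0:ℝ) ≤ |h s| := abs_nonneg _
    have efac : (t₂ - s) ^ (α - 1) * h s - (t₁ - s) ^ (α - 1) * h s =
        ((t₂ - s) ^ (α - 1) - (t₁ - s) ^ (α - 1)) * h s := by ring
    rw [efac, abs_mul, abs_of_nonpos (by linarith)]
    nlinarith
  have hA3 : (∫ s in (0:ℝ)..t₁, C * ((t₁ - s) ^ (α - 1) - (t₂ - s) ^ (α - 1))) ≤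
      C * (t₂ - t₁) ^ α / α := by
    rw [intervalIntegral.integral_const_mul,
      intervalIntegral.integral_sub (ker_intble hα0 t₁ 0 t₁) (ker_intble hα0 t₂ 0 t₁),
      ker_integral hα0 0 t₁, ker_integral' hα0 0 t₁ t₂, sub_zero, sub_zero]
    have e5 : t₁ ^ α ≤ t₂ ^ α := Real.rpow_le_rpow h0 h12 hα0.le
    have e6 : t₁ ^ α / α - (t₂ ^ α - (t₂ - t₁) ^ α) / α ≤ (t₂ - t₁) ^ α / α := by
      have e7 : t₁ ^ α / α - (t₂ ^ α - (t₂ - t₁) ^ α) / α =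
          (t₁ ^ α - t₂ ^ α + (t₂ - t₁) ^ α) / α := by ring
      rw [e7]
      gcongr
      linarith
    calc C * (t₁ ^ α / α - (t₂ ^ α - (t₂ - t₁) ^ α) / α)
        ≤ C * ((t₂ - t₁) ^ α / α) := mul_le_mul_of_nonneg_left e6 hC0
      _ = C * (t₂ - t₁) ^ α / α := by ring
  have hA : |(∫ s in (0:ℝ)..t₁, (t₂ - s) ^ (α - 1) * h s) -
      ∫ s in (0:ℝ)..t₁, (t₁ - s) ^ (α - 1) * h s| ≤ C * (t₂ - t₁) ^ α / α := by
    rw [← intervalIntegral.integral_sub i1 i3]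
    exact (hA1.trans hA2).trans hA3
  calc |(∫ s in (0:ℝ)..t₂, (t₂ - s) ^ (α - 1) * h s) -
        ∫ s in (0:ℝ)..t₁, (t₁ - s) ^ (α - 1) * h s|
      = |((∫ s in (0:ℝ)..t₁, (t₂ - s) ^ (α - 1) * h s) -
          ∫ s in (0:ℝ)..t₁, (t₁ - s) ^ (α - 1) * h s) +
          ∫ s in t₁..t₂, (t₂ - s) ^ (α - 1) * h s| := by rw [← split]; congr 1; ring
    _ ≤ |(∫ s in (0:ℝ)..t₁, (t₂ - s) ^ (α - 1) * h s) -
          ∫ s in (0:ℝ)..t₁, (t₁ - s) ^ (α - 1) * h s| +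
          |∫ s in t₁..t₂, (t₂ - s) ^ (α - 1) * h s| := abs_add_le _ _
    _ ≤ C * (t₂ - t₁) ^ α / α + C * (t₂ - t₁) ^ α / α := add_le_add hA hB
    _ = 2 * C * (t₂ - t₁) ^ α / α := by ring

lemma Phi_contOn (hα0 : 0 < α) (hα1 : α < 1) {h : ℝ → ℝ} (hh : Continuous h) {C b : ℝ}
    (hb : 0 ≤ b) (hC : ∀ s ∈ Icc (0:ℝ) b, |h s| ≤ C) :
    ContinuousOn (fun t => ∫ s in (0:ℝ)..t, (t - s) ^ (α - 1) * h s) (Icc 0 b) := by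
  have hC0 : 0 ≤ C := (abs_nonneg _).trans (hC 0 ⟨le_rfl, hb⟩)
  rw [Metric.continuousOn_iff]
  intro t ht ε hε
  have tend : Filter.Tendsto (fun d : ℝ => 2 * C * d ^ α / α) (nhds 0) (nhds 0) := by
    have h1 : Filter.Tendsto (fun d : ℝ => d ^ α) (nhds 0) (nhds (0:ℝ)) := by
      have := (Real.continuousAt_rpow_const 0 α (Or.inr hα0.le)).tendsto
      simpa [Real.zero_rpow hα0.ne'] using this
    have h2 := (h1.const_mul (2 * C)).div_const α
    simpa using h2
  have hev : ∀ᶠ d in nhds (0:ℝ), 2 * C * d ^ α / α < ε := tend.eventually_lt_const hε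
  rw [Metric.eventually_nhds_iff] at hev
  obtain ⟨δ, hδ0, hδ⟩ := hev
  refine ⟨δ, hδ0, ?_⟩
  intro t' ht' hdist
  have key : ∀ u v : ℝ, u ∈ Icc (0:ℝ) b → v ∈ Icc (0:ℝ) b → u ≤ v → dist v u < δ →
      dist (∫ s in (0:ℝ)..v, (v - s) ^ (α - 1) * h s)
        (∫ s in (0:ℝ)..u, (u - s) ^ (α - 1) * h s) < ε := by
    intro u v hu hv huv hd
    rw [Real.dist_eq]
    have hCv : ∀ s ∈ Icc (0:ℝ) v, |h s| ≤ C := fun s hs => hC s ⟨hs.1, hs.2.trans hv.2⟩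
    have hH := Phi_holder hα0 hα1 hh hu.1 huv hCv
    have hd' : dist (v - u) (0:ℝ) < δ := by
      rw [Real.dist_eq, sub_zero, abs_of_nonneg (by linarith)]
      rw [Real.dist_eq] at hd
      calc v - u ≤ |v - u| := le_abs_self _
        _ < δ := hd
    exact lt_of_le_of_lt hH (hδ hd')
  rcases le_total t t' with hc | hc
  · exact key t t' ht ht' hc hdist
  · rw [dist_comm]
    exact key t' t ht' ht hc (by rw [dist_comm]; exact hdist)

noncomputable def gfun (lam a : ℝ) (ha : (0:ℝ) ≤ a) (f : ℝ → ℝ → ℝ)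
    (y : C(Set.Icc (0:ℝ) a, ℝ)) (s : ℝ) : ℝ :=
  Real.exp (lam * s) * f s (Set.IccExtend ha y s)

end TVPaux

/-- existence and uniqueness of a continuous solution in Ω_γ of the
terminal-value integral equation. -/
theorem terminal_value_integral_equation_unique_solution
    (α lam a ya M L : ℝ) (hα0 : 0 < α) (hα1 : α < 1) (hlam : 0 ≤ lam) (ha : 0 < a)
    (f : ℝ → ℝ → ℝ) (hf : Continuous fun p : ℝ × ℝ => f p.1 p.2)
    (hM : ∀ t ∈ Set.Icc (0 : ℝ) a, ∀ u : ℝ, |f t u| ≤ M)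
    (hL : ∀ t ∈ Set.Icc (0 : ℝ) a, ∀ u v : ℝ, |f t u - f t v| ≤ L * |u - v|)
    (hLsmall : L < Real.Gamma (α + 1) / (2 * a ^ α * Real.exp (lam * a))) :
    ∃ y : ℝ → ℝ,
      (ContinuousOn y (Set.Icc 0 a) ∧
        (∀ t ∈ Set.Icc (0 : ℝ) a,
          |y t - ya * Real.exp (-lam * t)| ≤
            2 * a ^ α * M * Real.exp (lam * a) / Real.Gamma (1 + α)) ∧
        ∀ t ∈ Set.Icc (0 : ℝ) a,
          y t = ya * Real.exp (-lam * t) -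
            (Real.exp (-lam * t) / Real.Gamma α) *
              ((∫ s in (0 : ℝ)..a, Real.exp (lam * s) * (a - s) ^ (α - 1) * f s (y s)) -
                ∫ s in (0 : ℝ)..t, Real.exp (lam * s) * (t - s) ^ (α - 1) * f s (y s))) ∧
      ∀ z : ℝ → ℝ,
        (ContinuousOn z (Set.Icc 0 a) ∧
          (∀ t ∈ Set.Icc (0 : ℝ) a,
            |z t - ya * Real.exp (-lam * t)| ≤
              2 * a ^ α * M * Real.exp (lam * a) / Real.Gamma (1 + α)) ∧
          ∀ t ∈ Set.Icc (0 : ℝ) a,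
            z t = ya * Real.exp (-lam * t) -
              (Real.exp (-lam * t) / Real.Gamma α) *
                ((∫ s in (0 : ℝ)..a, Real.exp (lam * s) * (a - s) ^ (α - 1) * f s (z s)) -
                  ∫ s in (0 : ℝ)..t, Real.exp (lam * s) * (t - s) ^ (α - 1) * f s (z s))) →
        Set.EqOn z y (Set.Icc 0 a) := by
  classical
  haveI : CompactSpace (Set.Icc (0:ℝ) a) := isCompact_iff_compactSpace.mp isCompact_Icc
  have hΓ : 0 < Real.Gamma α := Real.Gamma_pos_of_pos hα0
  have hΓ1 : Real.Gamma (α + 1) = α * Real.Gamma α := Real.Gamma_add_one hα0.ne'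
  have hapow : 0 < a ^ α := Real.rpow_pos_of_pos ha _
  have hexpa : 0 < Real.exp (lam * a) := Real.exp_pos _
  have hM0 : 0 ≤ M := (abs_nonneg _).trans (hM 0 ⟨le_rfl, ha.le⟩ 0)
  set L' : ℝ := max L 0 with hL'def
  have hL'0 : 0 ≤ L' := le_max_right _ _
  have hL'small : L' < Real.Gamma (α + 1) / (2 * a ^ α * Real.exp (lam * a)) := by
    apply max_lt hLsmall
    rw [hΓ1]
    positivity
  set q : ℝ := 2 * L' * a ^ α * Real.exp (lam * a) / Real.Gamma (α + 1) with hqdef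
  have hΓα1 : 0 < Real.Gamma (α + 1) := by rw [hΓ1]; positivity
  have hq0 : 0 ≤ q := by positivity
  have hq1 : q < 1 := by
    rw [hqdef, div_lt_one hΓα1]
    have h1 := (lt_div_iff₀ (by positivity)).mp hL'small
    nlinarith [h1]
  -- basic continuity of g
  have hg_cont : ∀ y : C(Set.Icc (0:ℝ) a, ℝ), Continuous (TVPaux.gfun lam a ha.le f y) := by
    intro y
    exact (Real.continuous_exp.comp (continuous_const.mul continuous_id)).mul
      (hf.comp (continuous_id.prodMk y.continuous.Icc_extend'))
  have hgM : ∀ y : C(Set.Icc (0:ℝ) a, ℝ), ∀ s ∈ Set.Icc (0:ℝ) a,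
      |TVPaux.gfun lam a ha.le f y s| ≤ Real.exp (lam * a) * M := by
    intro y s hs
    rw [TVPaux.gfun, abs_mul, abs_of_nonneg (Real.exp_nonneg _)]
    exact mul_le_mul (Real.exp_le_exp.mpr (mul_le_mul_of_nonneg_left hs.2 hlam))
      (hM s hs _) (abs_nonneg _) (Real.exp_nonneg _)
  have hgLip : ∀ y z : C(Set.Icc (0:ℝ) a, ℝ), ∀ s ∈ Set.Icc (0:ℝ) a,
      |TVPaux.gfun lam a ha.le f y s - TVPaux.gfun lam a ha.le f z s| ≤
        Real.exp (lam * a) * L' * dist y z := by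
    intro y z s hs
    rw [TVPaux.gfun, TVPaux.gfun, ← mul_sub, abs_mul, abs_of_nonneg (Real.exp_nonneg _)]
    have h1 : |f s (Set.IccExtend ha.le y s) - f s (Set.IccExtend ha.le z s)| ≤ L' * dist y z := by
      have h2 := hL s hs (Set.IccExtend ha.le y s) (Set.IccExtend ha.le z s)
      have h3 : |Set.IccExtend ha.le y s - Set.IccExtend ha.le z s| ≤ dist y z := by
        have h4 := ContinuousMap.dist_apply_le_dist (f := y) (g := z) (Set.projIcc 0 a ha.le s)
        rwa [Real.dist_eq] at h4
      have h5 : L * |Set.IccExtend ha.le y s - Set.IccExtend ha.le z s| ≤ L' * dist y z := by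
        rcases le_or_gt L 0 with hL0 | hL0
        · have : L * |Set.IccExtend ha.le y s - Set.IccExtend ha.le z s| ≤ 0 :=
            mul_nonpos_of_nonpos_of_nonneg hL0 (abs_nonneg _)
          have : (0:ℝ) ≤ L' * dist y z := mul_nonneg hL'0 dist_nonneg
          linarith
        · have hLL' : L ≤ L' := le_max_left _ _
          calc L * |Set.IccExtend ha.le y s - Set.IccExtend ha.le z s|
              ≤ L * dist y z := mul_le_mul_of_nonneg_left h3 hL0.le
            _ ≤ L' * dist y z := mul_le_mul_of_nonneg_right hLL' dist_nonneg
      exact h2.trans h5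
    calc Real.exp (lam * s) * |f s (Set.IccExtend ha.le y s) - f s (Set.IccExtend ha.le z s)|
        ≤ Real.exp (lam * a) * (L' * dist y z) := by
          apply mul_le_mul (Real.exp_le_exp.mpr (mul_le_mul_of_nonneg_left hs.2 hlam)) h1
            (abs_nonneg _) (Real.exp_nonneg _)
      _ = Real.exp (lam * a) * L' * dist y z := by ring
  -- continuity of the operator's output
  have hE : Continuous fun t : ℝ => Real.exp (-lam * t) :=
    Real.continuous_exp.comp (continuous_const.mul continuous_id)
  have hcontA : ∀ y : C(Set.Icc (0:ℝ) a, ℝ), ContinuousOn (fun t =>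
      ya * Real.exp (-lam * t) - Real.exp (-lam * t) / Real.Gamma α *
        ((∫ s in (0:ℝ)..a, (a - s) ^ (α - 1) * TVPaux.gfun lam a ha.le f y s) -
          ∫ s in (0:ℝ)..t, (t - s) ^ (α - 1) * TVPaux.gfun lam a ha.le f y s))
      (Set.Icc 0 a) := by
    intro y
    apply ContinuousOn.sub ((continuous_const.mul hE).continuousOn)
    exact ((hE.div_const _).continuousOn).mul
      (continuousOn_const.sub (TVPaux.Phi_contOn hα0 hα1 (hg_cont y) ha.le (hgM y)))
  obtain ⟨T, hTapp⟩ : ∃ T : C(Set.Icc (0:ℝ) a, ℝ) → C(Set.Icc (0:ℝ) a, ℝ),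
      ∀ (y : C(Set.Icc (0:ℝ) a, ℝ)) (t : Set.Icc (0:ℝ) a), T y t =
        ya * Real.exp (-lam * ↑t) - Real.exp (-lam * ↑t) / Real.Gamma α *
          ((∫ s in (0:ℝ)..a, (a - s) ^ (α - 1) * TVPaux.gfun lam a ha.le f y s) -
            ∫ s in (0:ℝ)..↑t, (↑t - s) ^ (α - 1) * TVPaux.gfun lam a ha.le f y s) :=
    ⟨fun y => ⟨(Set.Icc (0:ℝ) a).restrict (fun t =>
      ya * Real.exp (-lam * t) - Real.exp (-lam * t) / Real.Gamma α *
        ((∫ s in (0:ℝ)..a, (a - s) ^ (α - 1) * TVPaux.gfun lam a ha.le f y s) -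
          ∫ s in (0:ℝ)..t, (t - s) ^ (α - 1) * TVPaux.gfun lam a ha.le f y s)),
      ((hcontA y).restrict)⟩, fun y t => rfl⟩
  -- contraction estimate
  have hsub : ∀ (y z : C(Set.Icc (0:ℝ) a, ℝ)) (u : ℝ), u ∈ Set.Icc (0:ℝ) a →
      |(∫ s in (0:ℝ)..u, (u - s) ^ (α - 1) * TVPaux.gfun lam a ha.le f y s) -
        ∫ s in (0:ℝ)..u, (u - s) ^ (α - 1) * TVPaux.gfun lam a ha.le f z s| ≤
        Real.exp (lam * a) * L' * dist y z * a ^ α / α := by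
    intro y z u hu
    rw [← intervalIntegral.integral_sub (TVPaux.kermul_intble hα0 u 0 u (hg_cont y))
      (TVPaux.kermul_intble hα0 u 0 u (hg_cont z))]
    have hrw : (fun s => (u - s) ^ (α - 1) * TVPaux.gfun lam a ha.le f y s -
        (u - s) ^ (α - 1) * TVPaux.gfun lam a ha.le f z s) =
        fun s => (u - s) ^ (α - 1) * (TVPaux.gfun lam a ha.le f y s - TVPaux.gfun lam a ha.le f z s) := by
      funext s; ring
    rw [hrw]
    have hb := TVPaux.ker_bound hα0 ((hg_cont y).sub (hg_cont z)) hu.1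
      (C := Real.exp (lam * a) * L' * dist y z)
      (fun s hs => hgLip y z s ⟨hs.1, hs.2.trans hu.2⟩)
    rw [sub_zero] at hb
    refine hb.trans ?_
    have hu' : u ^ α ≤ a ^ α := Real.rpow_le_rpow hu.1 hu.2 hα0.le
    have hc0 : 0 ≤ Real.exp (lam * a) * L' * dist y z :=
      mul_nonneg (mul_nonneg (Real.exp_nonneg _) hL'0) dist_nonneg
    gcongr
  have hTlip : ∀ y z : C(Set.Icc (0:ℝ) a, ℝ), dist (T y) (T z) ≤ q * dist y z := by
    intro y z
    rw [ContinuousMap.dist_le (mul_nonneg hq0 dist_nonneg)]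
    intro t
    rw [Real.dist_eq, hTapp y t, hTapp z t]
    set Iay := ∫ s in (0:ℝ)..a, (a - s) ^ (α - 1) * TVPaux.gfun lam a ha.le f y s with hIay
    set Iaz := ∫ s in (0:ℝ)..a, (a - s) ^ (α - 1) * TVPaux.gfun lam a ha.le f z s with hIaz
    set Ity := ∫ s in (0:ℝ)..(↑t:ℝ), ((↑t:ℝ) - s) ^ (α - 1) * TVPaux.gfun lam a ha.le f y s with hIty
    set Itz := ∫ s in (0:ℝ)..(↑t:ℝ), ((↑t:ℝ) - s) ^ (α - 1) * TVPaux.gfun lam a ha.le f z s with hItz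
    have hrw : ya * Real.exp (-lam * ↑t) - Real.exp (-lam * ↑t) / Real.Gamma α * (Iay - Ity) -
        (ya * Real.exp (-lam * ↑t) - Real.exp (-lam * ↑t) / Real.Gamma α * (Iaz - Itz)) =
        Real.exp (-lam * ↑t) / Real.Gamma α * ((Iaz - Iay) + (Ity - Itz)) := by ring
    rw [hrw, abs_mul]
    have hEb : |Real.exp (-lam * ↑t) / Real.Gamma α| ≤ 1 / Real.Gamma α := by
      rw [abs_of_nonneg (by positivity)]
      gcongr
      exact Real.exp_le_one_iff.mpr (by nlinarith [t.2.1])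
    have e1 := hsub y z a ⟨ha.le, le_rfl⟩
    have e2 := hsub y z ↑t t.2
    rw [← hIay, ← hIaz] at e1
    rw [← hIty, ← hItz] at e2
    have hsum : |(Iaz - Iay) + (Ity - Itz)| ≤
        2 * (Real.exp (lam * a) * L' * dist y z * a ^ α / α) := by
      calc |(Iaz - Iay) + (Ity - Itz)| ≤ |Iaz - Iay| + |Ity - Itz| := abs_add_le _ _
        _ ≤ _ := by rw [abs_sub_comm Iaz Iay]; linarith
    calc |Real.exp (-lam * ↑t) / Real.Gamma α| * |(Iaz - Iay) + (Ity - Itz)|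
        ≤ (1 / Real.Gamma α) * (2 * (Real.exp (lam * a) * L' * dist y z * a ^ α / α)) := by
          apply mul_le_mul hEb hsum (abs_nonneg _) (by positivity)
      _ = q * dist y z := by
          rw [hqdef, hΓ1]
          field_simp
  -- single-function integral bound
  have habs : ∀ (y : C(Set.Icc (0:ℝ) a, ℝ)), ∀ u ∈ Set.Icc (0:ℝ) a,
      |∫ s in (0:ℝ)..u, (u - s) ^ (α - 1) * TVPaux.gfun lam a ha.le f y s| ≤
        Real.exp (lam * a) * M * a ^ α / α := by
    intro y u hu
    have hb := TVPaux.ker_bound hα0 (hg_cont y) hu.1 (C := Real.exp (lam * a) * M)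
      (fun s hs => hgM y s ⟨hs.1, hs.2.trans hu.2⟩)
    rw [sub_zero] at hb
    refine hb.trans ?_
    have hu' : u ^ α ≤ a ^ α := Real.rpow_le_rpow hu.1 hu.2 hα0.le
    gcongr
  -- fixed point
  haveI : Nonempty C(Set.Icc (0:ℝ) a, ℝ) := ⟨ContinuousMap.const _ 0⟩
  have hK1 : (⟨q, hq0⟩ : NNReal) < 1 := by exact_mod_cast hq1
  have hcontr : ContractingWith ⟨q, hq0⟩ T := ⟨hK1, LipschitzWith.of_dist_le_mul hTlip⟩
  obtain ⟨ystar, hfix, huniq⟩ : ∃ x : C(Set.Icc (0:ℝ) a, ℝ), T x = x ∧ ∀ w, T w = w → w = x :=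
    ⟨ContractingWith.fixedPoint T hcontr, hcontr.fixedPoint_isFixedPt,
      fun w hw => hcontr.fixedPoint_unique hw⟩
  have hyval : ∀ t (ht : t ∈ Set.Icc (0:ℝ) a), Set.IccExtend ha.le (⇑ystar) t =
      ya * Real.exp (-lam * t) - Real.exp (-lam * t) / Real.Gamma α *
        ((∫ s in (0:ℝ)..a, (a - s) ^ (α - 1) * TVPaux.gfun lam a ha.le f ystar s) -
          ∫ s in (0:ℝ)..t, (t - s) ^ (α - 1) * TVPaux.gfun lam a ha.le f ystar s) := by
    intro t ht
    have h1 : Set.IccExtend ha.le (⇑ystar) t = ystar ⟨t, ht⟩ := Set.IccExtend_of_mem _ _ ht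
    have h2 := hTapp ystar ⟨t, ht⟩
    rw [hfix] at h2
    exact h1.trans h2
  have hIcongr : ∀ (y : C(Set.Icc (0:ℝ) a, ℝ)) (u : ℝ),
      (∫ s in (0:ℝ)..u, Real.exp (lam * s) * (u - s) ^ (α - 1) *
        f s (Set.IccExtend ha.le (⇑y) s)) =
      ∫ s in (0:ℝ)..u, (u - s) ^ (α - 1) * TVPaux.gfun lam a ha.le f y s := fun y u =>
    intervalIntegral.integral_congr (fun s _ => by simp only [TVPaux.gfun]; ring)
  refine ⟨Set.IccExtend ha.le (⇑ystar), ⟨?_, ?_, ?_⟩, ?_⟩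
  · exact (ystar.continuous.Icc_extend').continuousOn
  · intro t ht
    rw [hyval t ht]
    set Ia := ∫ s in (0:ℝ)..a, (a - s) ^ (α - 1) * TVPaux.gfun lam a ha.le f ystar s with hIa
    set It := ∫ s in (0:ℝ)..t, (t - s) ^ (α - 1) * TVPaux.gfun lam a ha.le f ystar s with hIt
    have e1 := habs ystar a ⟨ha.le, le_rfl⟩
    have e2 := habs ystar t ht
    rw [← hIa] at e1
    rw [← hIt] at e2
    have h2 : ya * Real.exp (-lam * t) - Real.exp (-lam * t) / Real.Gamma α * (Ia - It) -
        ya * Real.exp (-lam * t) = -(Real.exp (-lam * t) / Real.Gamma α * (Ia - It)) := by ring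
    rw [h2, abs_neg, abs_mul]
    have hEb : |Real.exp (-lam * t) / Real.Gamma α| ≤ 1 / Real.Gamma α := by
      rw [abs_of_nonneg (by positivity)]
      gcongr
      exact Real.exp_le_one_iff.mpr (by nlinarith [ht.1])
    have hsum : |Ia - It| ≤ 2 * (Real.exp (lam * a) * M * a ^ α / α) := by
      calc |Ia - It| ≤ |Ia| + |It| := abs_sub _ _
        _ ≤ _ := by linarith
    calc |Real.exp (-lam * t) / Real.Gamma α| * |Ia - It|
        ≤ (1 / Real.Gamma α) * (2 * (Real.exp (lam * a) * M * a ^ α / α)) := by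
          apply mul_le_mul hEb hsum (abs_nonneg _) (by positivity)
      _ = 2 * a ^ α * M * Real.exp (lam * a) / Real.Gamma (1 + α) := by
          rw [show (1:ℝ) + α = α + 1 from add_comm 1 α, hΓ1]
          field_simp
  · intro t ht
    rw [hIcongr ystar a, hIcongr ystar t]
    exact hyval t ht
  · rintro z ⟨hzc, -, hzeq⟩
    have hzfix : T ⟨(Set.Icc (0:ℝ) a).restrict z, hzc.restrict⟩ =
        (⟨(Set.Icc (0:ℝ) a).restrict z, hzc.restrict⟩ : C(Set.Icc (0:ℝ) a, ℝ)) := by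
      ext t
      rw [hTapp]
      have hIeqz : ∀ u, u ∈ Set.Icc (0:ℝ) a →
          (∫ s in (0:ℝ)..u, (u - s) ^ (α - 1) *
            TVPaux.gfun lam a ha.le f ⟨(Set.Icc (0:ℝ) a).restrict z, hzc.restrict⟩ s) =
          ∫ s in (0:ℝ)..u, Real.exp (lam * s) * (u - s) ^ (α - 1) * f s (z s) := by
        intro u hu
        apply intervalIntegral.integral_congr
        intro s hs
        rw [Set.uIcc_of_le hu.1] at hs
        have hsI : s ∈ Set.Icc (0:ℝ) a := ⟨hs.1, hs.2.trans hu.2⟩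
        have hz1 : Set.IccExtend ha.le
            (⇑(⟨(Set.Icc (0:ℝ) a).restrict z, hzc.restrict⟩ : C(Set.Icc (0:ℝ) a, ℝ))) s = z s := by
          rw [Set.IccExtend_of_mem _ _ hsI]
          rfl
        simp only [TVPaux.gfun, hz1]
        ring
      rw [hIeqz a ⟨ha.le, le_rfl⟩, hIeqz ↑t t.2]
      exact (hzeq ↑t t.2).symm
    have hzeq2 := huniq _ hzfix
    intro t ht
    have h1 : z t = (⟨(Set.Icc (0:ℝ) a).restrict z, hzc.restrict⟩ :
        C(Set.Icc (0:ℝ) a, ℝ)) ⟨t, ht⟩ := rfl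
    rw [h1, hzeq2]
    exact (Set.IccExtend_of_mem ha.le (⇑ystar) ht).symm
end

section
/- Let 0 < α < 1, λ ≥ 0, a > 0, f continuous and Lipschitz with constant L < Γ(α+1)/(2 a^α e^{λa}) in its second argument, and let y, z be the unique continuous solutions of the terminal-value integral equations with terminal values y_a and z_a respectively, i.e., y(t) = y_a e^{-λt} − (e^{-λt}/Γ(α))[∫₀ᵃ e^{λs}(a−s)^{α−1} f(s,y(s)) ds − ∫₀ᵗ e^{λs}(t−s)^{α−1} f(s,y(s)) ds] and similarly for z with z_a. Then sup_{t∈[0,a]} |y(t) − z(t)| ≤ |y_a − z_a| / β, where β = 1 − 2 L e^{λa} a^α / Γ(α+1) > 0. -/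
open Real Set
open MeasureTheory intervalIntegral

/-- continuous dependence of the solution on the terminal value. -/
theorem continuous_dependence_terminal_value
    (α lam a ya za L : ℝ) (hα0 : 0 < α) (hα1 : α < 1) (hlam : 0 ≤ lam) (ha : 0 < a)
    (f : ℝ → ℝ → ℝ) (hf : Continuous fun p : ℝ × ℝ => f p.1 p.2)
    (hL : ∀ t ∈ Set.Icc (0 : ℝ) a, ∀ u v : ℝ, |f t u - f t v| ≤ L * |u - v|)
    (hLsmall : L < Real.Gamma (α + 1) / (2 * a ^ α * Real.exp (lam * a)))
    (y z : ℝ → ℝ) (hy : ContinuousOn y (Set.Icc 0 a)) (hz : ContinuousOn z (Set.Icc 0 a))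
    (hyeq : ∀ t ∈ Set.Icc (0 : ℝ) a,
      y t = ya * Real.exp (-lam * t) -
        (Real.exp (-lam * t) / Real.Gamma α) *
          ((∫ s in (0 : ℝ)..a, Real.exp (lam * s) * (a - s) ^ (α - 1) * f s (y s)) -
            ∫ s in (0 : ℝ)..t, Real.exp (lam * s) * (t - s) ^ (α - 1) * f s (y s)))
    (hzeq : ∀ t ∈ Set.Icc (0 : ℝ) a,
      z t = za * Real.exp (-lam * t) -
        (Real.exp (-lam * t) / Real.Gamma α) *
          ((∫ s in (0 : ℝ)..a, Real.exp (lam * s) * (a - s) ^ (α - 1) * f s (z s)) -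
            ∫ s in (0 : ℝ)..t, Real.exp (lam * s) * (t - s) ^ (α - 1) * f s (z s))) :
    0 < 1 - 2 * L * Real.exp (lam * a) * a ^ α / Real.Gamma (α + 1) ∧
      ∀ t ∈ Set.Icc (0 : ℝ) a,
        |y t - z t| ≤ |ya - za| / (1 - 2 * L * Real.exp (lam * a) * a ^ α / Real.Gamma (α + 1)) := by
  have hΓα : 0 < Real.Gamma α := Real.Gamma_pos_of_pos hα0
  have hΓα1 : 0 < Real.Gamma (α + 1) := Real.Gamma_pos_of_pos (by linarith)
  have hΓrec : Real.Gamma (α + 1) = α * Real.Gamma α := Real.Gamma_add_one (ne_of_gt hα0)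
  have hapow : 0 < a ^ α := Real.rpow_pos_of_pos ha α
  have hexp : 0 < Real.exp (lam * a) := Real.exp_pos _
  have hL0 : 0 ≤ L := by
    have h := hL 0 ⟨le_refl 0, ha.le⟩ 0 1
    simp only [zero_sub, abs_neg, abs_one, mul_one] at h
    exact (abs_nonneg _).trans h
  set c := 2 * L * Real.exp (lam * a) * a ^ α / Real.Gamma (α + 1) with hc
  have hc1 : c < 1 := by
    rw [hc, div_lt_one hΓα1]
    have := (lt_div_iff₀ (by positivity)).mp hLsmall
    nlinarith
  have hc0 : 0 ≤ c := by positivity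
  have hβ : 0 < 1 - c := by linarith
  refine ⟨hβ, ?_⟩
  -- integrability
  have key : ∀ t ∈ Icc (0:ℝ) a, ∀ w : ℝ → ℝ, ContinuousOn w (Icc 0 a) →
      IntervalIntegrable (fun s => Real.exp (lam*s) * (t-s)^(α-1) * f s (w s)) volume 0 t := by
    intro t ht w hw
    have h1 : IntervalIntegrable (fun s => (t - s)^(α-1)) volume 0 t := by
      have := (intervalIntegrable_rpow' (a:=0) (b:=t) (r:=α-1) (by linarith)).comp_sub_left t
      simpa using this.symm
    have hsub : uIcc (0:ℝ) t ⊆ Icc 0 a := by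
      rw [uIcc_of_le ht.1]; exact Icc_subset_Icc le_rfl ht.2
    have hcont : ContinuousOn (fun s => Real.exp (lam*s) * f s (w s)) (uIcc (0:ℝ) t) :=
      ((Real.continuous_exp.comp (continuous_const.mul continuous_id)).continuousOn).mul
        (hf.comp_continuousOn (continuousOn_id.prodMk (hw.mono hsub)))
    have heq : (fun s => Real.exp (lam*s) * (t-s)^(α-1) * f s (w s))
        = fun s => (t-s)^(α-1) * (Real.exp (lam*s) * f s (w s)) := by funext s; ring
    rw [heq]; exact h1.mul_continuousOn hcont
  -- max point
  obtain ⟨t₀, ht₀, hmax'⟩ := isCompact_Icc.exists_isMaxOn (nonempty_Icc.mpr ha.le)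
    ((hy.sub hz).abs)
  have hmax : ∀ s ∈ Icc (0:ℝ) a, |y s - z s| ≤ |y t₀ - z t₀| := fun s hs => hmax' hs
  set M := |y t₀ - z t₀| with hMdef
  have hM0 : 0 ≤ M := abs_nonneg _
  -- bound on difference of integrals
  have keybd : ∀ t ∈ Icc (0:ℝ) a,
      |(∫ s in (0:ℝ)..t, Real.exp (lam*s) * (t-s)^(α-1) * f s (y s)) -
        ∫ s in (0:ℝ)..t, Real.exp (lam*s) * (t-s)^(α-1) * f s (z s)|
        ≤ L * M * Real.exp (lam*a) * a^α / α := by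
    intro t ht
    rw [← intervalIntegral.integral_sub (key t ht y hy) (key t ht z hz)]
    have hptw : ∀ᵐ s ∂(volume.restrict (Set.uIoc (0:ℝ) t)),
        ‖Real.exp (lam*s) * (t-s)^(α-1) * f s (y s) -
          Real.exp (lam*s) * (t-s)^(α-1) * f s (z s)‖
        ≤ L * M * Real.exp (lam*a) * ((t-s)^(α-1)) := by
      rw [ae_restrict_iff' measurableSet_uIoc]
      filter_upwards with s hs
      rw [uIoc_of_le ht.1] at hs
      have hs0 : 0 < s := hs.1
      have hst : s ≤ t := hs.2
      have hsa : s ≤ a := hst.trans ht.2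
      have hrp : (0:ℝ) ≤ (t-s)^(α-1) := Real.rpow_nonneg (by linarith) _
      have hlip : |f s (y s) - f s (z s)| ≤ L * M := by
        calc |f s (y s) - f s (z s)| ≤ L * |y s - z s| := hL s ⟨hs0.le, hsa⟩ _ _
          _ ≤ L * M := mul_le_mul_of_nonneg_left (hmax s ⟨hs0.le, hsa⟩) hL0
      have hee : Real.exp (lam*s) ≤ Real.exp (lam*a) :=
        Real.exp_le_exp.mpr (mul_le_mul_of_nonneg_left hsa hlam)
      calc ‖Real.exp (lam*s) * (t-s)^(α-1) * f s (y s) -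
            Real.exp (lam*s) * (t-s)^(α-1) * f s (z s)‖
          = Real.exp (lam*s) * (t-s)^(α-1) * |f s (y s) - f s (z s)| := by
            rw [← mul_sub, Real.norm_eq_abs, abs_mul, abs_mul,
              abs_of_pos (Real.exp_pos _), abs_of_nonneg hrp]
        _ ≤ Real.exp (lam*a) * (t-s)^(α-1) * (L * M) := by
            apply mul_le_mul _ hlip (abs_nonneg _) (by positivity)
            exact mul_le_mul_of_nonneg_right hee hrp
        _ = L * M * Real.exp (lam*a) * ((t-s)^(α-1)) := by ring
    have hbint : IntervalIntegrable (fun s => L * M * Real.exp (lam*a) * ((t-s)^(α-1)))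
        volume 0 t := by
      apply IntervalIntegrable.const_mul
      have := (intervalIntegrable_rpow' (a:=0) (b:=t) (r:=α-1) (by linarith)).comp_sub_left t
      simpa using this.symm
    have hle := intervalIntegral.norm_integral_le_abs_of_norm_le hptw hbint
    rw [Real.norm_eq_abs] at hle
    refine hle.trans ?_
    rw [intervalIntegral.integral_const_mul]
    have hval : (∫ s in (0:ℝ)..t, (t-s)^(α-1)) = t^α / α := by
      rw [intervalIntegral.integral_comp_sub_left (fun x => x^(α-1)) t]
      simp only [sub_self, sub_zero]
      rw [integral_rpow (Or.inl (by linarith))]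
      rw [Real.zero_rpow (by linarith : α - 1 + 1 ≠ 0)]
      ring_nf
    rw [hval]
    have htα : t^α ≤ a^α := Real.rpow_le_rpow ht.1 ht.2 hα0.le
    have h1 : (0:ℝ) ≤ L * M * Real.exp (lam*a) := by positivity
    have htp : (0:ℝ) ≤ t^α := Real.rpow_nonneg ht.1 α
    rw [abs_of_nonneg (mul_nonneg h1 (div_nonneg htp hα0.le)), mul_div_assoc]
    gcongr
  -- main estimate at t₀
  have hmain : M ≤ |ya - za| + c * M := by
    have hexpt : Real.exp (-lam * t₀) ≤ 1 := by
      rw [Real.exp_le_one_iff]; nlinarith [ht₀.1]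
    have hexpt0 : 0 < Real.exp (-lam * t₀) := Real.exp_pos _
    have hdiff : y t₀ - z t₀ = (ya - za) * Real.exp (-lam * t₀) -
        (Real.exp (-lam * t₀) / Real.Gamma α) *
          (((∫ s in (0:ℝ)..a, Real.exp (lam*s) * (a-s)^(α-1) * f s (y s)) -
            ∫ s in (0:ℝ)..a, Real.exp (lam*s) * (a-s)^(α-1) * f s (z s)) -
          ((∫ s in (0:ℝ)..t₀, Real.exp (lam*s) * (t₀-s)^(α-1) * f s (y s)) -
            ∫ s in (0:ℝ)..t₀, Real.exp (lam*s) * (t₀-s)^(α-1) * f s (z s))) := by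
      rw [hyeq t₀ ht₀, hzeq t₀ ht₀]; ring
    have hA := keybd a ⟨ha.le, le_refl a⟩
    have hB := keybd t₀ ht₀
    have hCb : L * M * Real.exp (lam*a) * a^α / α ≥ 0 := by positivity
    calc M = |y t₀ - z t₀| := rfl
      _ ≤ |ya - za| * Real.exp (-lam * t₀) +
          (Real.exp (-lam * t₀) / Real.Gamma α) *
            (L * M * Real.exp (lam*a) * a^α / α + L * M * Real.exp (lam*a) * a^α / α) := by
          rw [hdiff]
          refine (abs_sub _ _).trans ?_
          gcongr
          · rw [abs_mul, abs_of_pos hexpt0]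
          · rw [abs_mul, abs_of_pos (by positivity : (0:ℝ) <
              Real.exp (-lam * t₀) / Real.Gamma α)]
            gcongr
            exact (abs_sub _ _).trans (by gcongr)
      _ ≤ |ya - za| * 1 + (1 / Real.Gamma α) *
            (L * M * Real.exp (lam*a) * a^α / α + L * M * Real.exp (lam*a) * a^α / α) := by
          have hX : (0:ℝ) ≤ L * M * Real.exp (lam*a) * a^α / α
              + L * M * Real.exp (lam*a) * a^α / α := by positivity
          refine add_le_add (mul_le_mul_of_nonneg_left hexpt (abs_nonneg _)) ?_
          refine mul_le_mul_of_nonneg_right ?_ hX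
          rw [div_le_div_iff₀ hΓα hΓα]
          nlinarith
      _ = |ya - za| + c * M := by
          rw [hc, hΓrec]
          field_simp
          ring
  -- conclude
  intro t ht
  have h1 : M ≤ |ya - za| / (1 - c) := by
    rw [le_div_iff₀ hβ]; nlinarith
  exact (hmax t ht).trans h1
end

section
/- Let 0 < α < 1, λ ≥ 0, a > 0, and let f, f̃ : [0,a] × ℝ → ℝ be continuous and bounded, with f Lipschitz in its second argument with constant L < Γ(α+1)/(2 a^α e^{λa}). If y and z are the unique continuous solutions on [0,a] of the terminal-value integral equations with right-hand sides f and f̃ respectively (and the same terminal value y_a), then sup_{t∈[0,a]} |y(t) − z(t)| ≤ (2 a^α e^{λa} / (β Γ(α+1))) · sup_{(t,u)} |f(t,u) − f̃(t,u)|, where β = 1 − 2 L a^α e^{λa}/Γ(α+1). -/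
open Real Set MeasureTheory intervalIntegral

lemma rpow_intInt {α : ℝ} (t : ℝ) (hα : 0 < α) :
    IntervalIntegrable (fun s => (t - s) ^ (α - 1)) volume 0 t := by
  have h := (intervalIntegrable_rpow' (a := t) (b := 0)
    (by linarith : (-1:ℝ) < α - 1)).comp_sub_left t
  simpa using h

lemma rpow_int_val {α : ℝ} (t : ℝ) (hα : 0 < α) :
    (∫ s in (0:ℝ)..t, (t - s) ^ (α - 1)) = t ^ α / α := by
  rw [intervalIntegral.integral_comp_sub_left (fun x => x ^ (α - 1)) t]
  simp only [sub_self, sub_zero]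
  rw [integral_rpow (Or.inl (by linarith)), sub_add_cancel,
    Real.zero_rpow hα.ne', sub_zero]

lemma key_bound {α lam t C : ℝ} (hα : 0 < α) (hlam : 0 ≤ lam) (ht : 0 ≤ t) (hC : 0 ≤ C)
    {g : ℝ → ℝ} (hg : ContinuousOn g (Icc 0 t))
    (hgC : ∀ s ∈ Icc (0:ℝ) t, |g s| ≤ C) :
    |∫ s in (0:ℝ)..t, Real.exp (lam * s) * (t - s) ^ (α - 1) * g s|
      ≤ Real.exp (lam * t) * C * (t ^ α / α) := by
  have huIcc : uIcc (0:ℝ) t = Icc 0 t := uIcc_of_le ht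
  have h0 : IntervalIntegrable (fun s => (t - s) ^ (α - 1)) volume 0 t := rpow_intInt t hα
  have h1 : IntervalIntegrable (fun s => Real.exp (lam * s) * (t - s) ^ (α - 1)) volume 0 t :=
    h0.continuousOn_mul (by fun_prop)
  have h2 : IntervalIntegrable (fun s => Real.exp (lam * s) * (t - s) ^ (α - 1) * g s)
      volume 0 t := h1.mul_continuousOn (huIcc ▸ hg)
  have hb : IntervalIntegrable (fun s => Real.exp (lam * t) * C * (t - s) ^ (α - 1))
      volume 0 t := h0.continuousOn_mul continuousOn_const
  calc |∫ s in (0:ℝ)..t, Real.exp (lam*s) * (t-s)^(α-1) * g s|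
      ≤ ∫ s in (0:ℝ)..t, |Real.exp (lam*s) * (t-s)^(α-1) * g s| :=
        intervalIntegral.abs_integral_le_integral_abs ht
    _ ≤ ∫ s in (0:ℝ)..t, Real.exp (lam*t) * C * (t-s)^(α-1) := by
        apply intervalIntegral.integral_mono_on ht h2.abs hb
        intro x hx
        have hp : (0:ℝ) ≤ (t - x) ^ (α - 1) := Real.rpow_nonneg (by linarith [hx.2]) _
        rw [abs_mul, abs_mul, abs_of_pos (Real.exp_pos _), abs_of_nonneg hp]
        have he : Real.exp (lam * x) ≤ Real.exp (lam * t) :=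
          Real.exp_le_exp.mpr (by nlinarith [hx.1, hx.2])
        calc Real.exp (lam*x) * (t-x)^(α-1) * |g x|
            ≤ Real.exp (lam*t) * (t-x)^(α-1) * C :=
              mul_le_mul (mul_le_mul_of_nonneg_right he hp) (hgC x hx) (abs_nonneg _)
                (by positivity)
          _ = Real.exp (lam*t) * C * (t-x)^(α-1) := by ring
    _ = Real.exp (lam*t) * C * (t ^ α / α) := by
        rw [intervalIntegral.integral_const_mul, rpow_int_val t hα]


/-- continuous dependence of the solution on the right-hand side f. -/
theorem continuous_dependence_rhs
    (α lam a ya L ε : ℝ) (hα0 : 0 < α) (hα1 : α < 1) (hlam : 0 ≤ lam) (ha : 0 < a)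
    (f ftilde : ℝ → ℝ → ℝ)
    (hf : Continuous fun p : ℝ × ℝ => f p.1 p.2)
    (hftilde : Continuous fun p : ℝ × ℝ => ftilde p.1 p.2)
    (hL : ∀ t ∈ Set.Icc (0 : ℝ) a, ∀ u v : ℝ, |f t u - f t v| ≤ L * |u - v|)
    (hLsmall : L < Real.Gamma (α + 1) / (2 * a ^ α * Real.exp (lam * a)))
    (hε : ∀ t ∈ Set.Icc (0 : ℝ) a, ∀ u : ℝ, |f t u - ftilde t u| ≤ ε)
    (y z : ℝ → ℝ) (hy : ContinuousOn y (Set.Icc 0 a)) (hz : ContinuousOn z (Set.Icc 0 a))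
    (hyeq : ∀ t ∈ Set.Icc (0 : ℝ) a,
      y t = ya * Real.exp (-lam * t) -
        (Real.exp (-lam * t) / Real.Gamma α) *
          ((∫ s in (0 : ℝ)..a, Real.exp (lam * s) * (a - s) ^ (α - 1) * f s (y s)) -
            ∫ s in (0 : ℝ)..t, Real.exp (lam * s) * (t - s) ^ (α - 1) * f s (y s)))
    (hzeq : ∀ t ∈ Set.Icc (0 : ℝ) a,
      z t = ya * Real.exp (-lam * t) -
        (Real.exp (-lam * t) / Real.Gamma α) *
          ((∫ s in (0 : ℝ)..a, Real.exp (lam * s) * (a - s) ^ (α - 1) * ftilde s (z s)) -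
            ∫ s in (0 : ℝ)..t, Real.exp (lam * s) * (t - s) ^ (α - 1) * ftilde s (z s))) :
    ∀ t ∈ Set.Icc (0 : ℝ) a,
      |y t - z t| ≤
        (2 * a ^ α * Real.exp (lam * a) /
            ((1 - 2 * L * a ^ α * Real.exp (lam * a) / Real.Gamma (α + 1)) *
              Real.Gamma (α + 1))) * ε := by
  -- basic positivity facts
  have hΓα : 0 < Real.Gamma α := Real.Gamma_pos_of_pos hα0
  have hΓ1 : 0 < Real.Gamma (α + 1) := Real.Gamma_pos_of_pos (by linarith)
  have hΓadd : Real.Gamma (α + 1) = α * Real.Gamma α := Real.Gamma_add_one hα0.ne'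
  have hL0 : 0 ≤ L := by
    have := hL 0 ⟨le_rfl, ha.le⟩ 1 0
    simp at this
    calc (0:ℝ) ≤ |f 0 1 - f 0 0| := abs_nonneg _
      _ ≤ L := by simpa using this
  have hε0 : 0 ≤ ε := le_trans (abs_nonneg _) (hε 0 ⟨le_rfl, ha.le⟩ 0)
  set K : ℝ := 2 * a ^ α * Real.exp (lam * a) / Real.Gamma (α + 1) with hK
  have hK0 : 0 < K := div_pos (by positivity) hΓ1
  have hKL : K * L < 1 := by
    have h := mul_lt_mul_of_pos_left hLsmall hK0
    have : K * (Real.Gamma (α + 1) / (2 * a ^ α * Real.exp (lam * a))) = 1 := by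
      rw [hK]; field_simp
    linarith [h, this.le, this.ge]
  -- the maximum of |y - z|
  have hD : ContinuousOn (fun s => |y s - z s|) (Icc 0 a) := (hy.sub hz).abs
  obtain ⟨t₀, ht₀, hmax⟩ := isCompact_Icc.exists_isMaxOn (Set.nonempty_Icc.mpr ha.le) hD
  set M : ℝ := |y t₀ - z t₀| with hMdef
  have hM : ∀ s ∈ Icc (0:ℝ) a, |y s - z s| ≤ M := fun s hs => hmax hs
  have hM0 : 0 ≤ M := abs_nonneg _
  set C : ℝ := L * M + ε with hCdef
  have hC0 : 0 ≤ C := by positivity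
  -- continuity of composed functions
  have hFy : ContinuousOn (fun s => f s (y s)) (Icc 0 a) :=
    by have := hf.comp_continuousOn (ContinuousOn.prodMk continuousOn_id hy); exact this
  have hGz : ContinuousOn (fun s => ftilde s (z s)) (Icc 0 a) :=
    by have := hftilde.comp_continuousOn (ContinuousOn.prodMk continuousOn_id hz); exact this
  have hg : ContinuousOn (fun s => f s (y s) - ftilde s (z s)) (Icc 0 a) := hFy.sub hGz
  have hgC : ∀ s ∈ Icc (0:ℝ) a, |f s (y s) - ftilde s (z s)| ≤ C := by
    intro s hs
    have h1 : |f s (y s) - f s (z s)| ≤ L * |y s - z s| := hL s hs _ _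
    have h2 : |f s (z s) - ftilde s (z s)| ≤ ε := hε s hs _
    have h3 : L * |y s - z s| ≤ L * M := mul_le_mul_of_nonneg_left (hM s hs) hL0
    calc |f s (y s) - ftilde s (z s)|
        ≤ |f s (y s) - f s (z s)| + |f s (z s) - ftilde s (z s)| := by
          have := abs_sub_le (f s (y s)) (f s (z s)) (ftilde s (z s)); linarith
      _ ≤ C := by rw [hCdef]; linarith
  -- integrability
  have hint : ∀ t ∈ Icc (0:ℝ) a, ∀ F : ℝ → ℝ, ContinuousOn F (Icc 0 a) →
      IntervalIntegrable (fun s => Real.exp (lam*s) * (t-s)^(α-1) * F s) volume 0 t := by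
    intro t ht F hF
    have huIcc : uIcc (0:ℝ) t = Icc 0 t := uIcc_of_le ht.1
    exact ((rpow_intInt t hα0).continuousOn_mul (by fun_prop)).mul_continuousOn
      (huIcc ▸ hF.mono (Icc_subset_Icc le_rfl ht.2))
  -- the main claim at each point
  have claim : ∀ t ∈ Icc (0:ℝ) a, |y t - z t| ≤ K * C := by
    intro t ht
    have hta : Icc (0:ℝ) t ⊆ Icc 0 a := Icc_subset_Icc le_rfl ht.2
    -- difference of A-integrals
    have hA : (∫ s in (0:ℝ)..a, Real.exp (lam*s) * (a-s)^(α-1) * f s (y s)) -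
        (∫ s in (0:ℝ)..a, Real.exp (lam*s) * (a-s)^(α-1) * ftilde s (z s)) =
        ∫ s in (0:ℝ)..a, Real.exp (lam*s) * (a-s)^(α-1) * (f s (y s) - ftilde s (z s)) := by
      rw [← intervalIntegral.integral_sub (hint a ⟨ha.le, le_rfl⟩ _ hFy)
        (hint a ⟨ha.le, le_rfl⟩ _ hGz)]
      apply intervalIntegral.integral_congr
      intro s _
      ring
    have hB : (∫ s in (0:ℝ)..t, Real.exp (lam*s) * (t-s)^(α-1) * f s (y s)) -
        (∫ s in (0:ℝ)..t, Real.exp (lam*s) * (t-s)^(α-1) * ftilde s (z s)) =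
        ∫ s in (0:ℝ)..t, Real.exp (lam*s) * (t-s)^(α-1) * (f s (y s) - ftilde s (z s)) := by
      rw [← intervalIntegral.integral_sub (hint t ht _ hFy) (hint t ht _ hGz)]
      apply intervalIntegral.integral_congr
      intro s _
      ring
    have hAbd : |(∫ s in (0:ℝ)..a, Real.exp (lam*s) * (a-s)^(α-1) * f s (y s)) -
        (∫ s in (0:ℝ)..a, Real.exp (lam*s) * (a-s)^(α-1) * ftilde s (z s))|
        ≤ Real.exp (lam*a) * C * (a ^ α / α) := by
      rw [hA]
      exact key_bound hα0 hlam ha.le hC0 hg hgC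
    have hBbd : |(∫ s in (0:ℝ)..t, Real.exp (lam*s) * (t-s)^(α-1) * f s (y s)) -
        (∫ s in (0:ℝ)..t, Real.exp (lam*s) * (t-s)^(α-1) * ftilde s (z s))|
        ≤ Real.exp (lam*a) * C * (a ^ α / α) := by
      rw [hB]
      calc |∫ s in (0:ℝ)..t, Real.exp (lam*s) * (t-s)^(α-1) * (f s (y s) - ftilde s (z s))|
          ≤ Real.exp (lam*t) * C * (t ^ α / α) :=
            key_bound hα0 hlam ht.1 hC0 (hg.mono hta) (fun s hs => hgC s (hta hs))
        _ ≤ Real.exp (lam*a) * C * (a ^ α / α) := by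
            have h1 : Real.exp (lam*t) ≤ Real.exp (lam*a) :=
              Real.exp_le_exp.mpr (by nlinarith [ht.1, ht.2])
            have h2 : t ^ α ≤ a ^ α := Real.rpow_le_rpow ht.1 ht.2 hα0.le
            have hp1 : (0:ℝ) ≤ t ^ α := Real.rpow_nonneg ht.1 _
            have he : (0:ℝ) < Real.exp (lam*t) := Real.exp_pos _
            gcongr
    -- combine via the integral equations
    have hyz : y t - z t = (Real.exp (-lam*t) / Real.Gamma α) *
        (((∫ s in (0:ℝ)..a, Real.exp (lam*s) * (a-s)^(α-1) * ftilde s (z s)) -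
          (∫ s in (0:ℝ)..a, Real.exp (lam*s) * (a-s)^(α-1) * f s (y s))) -
         ((∫ s in (0:ℝ)..t, Real.exp (lam*s) * (t-s)^(α-1) * ftilde s (z s)) -
          (∫ s in (0:ℝ)..t, Real.exp (lam*s) * (t-s)^(α-1) * f s (y s)))) := by
      rw [hyeq t ht, hzeq t ht]; ring
    have hexp : Real.exp (-lam*t) ≤ 1 := by
      rw [← Real.exp_zero]
      exact Real.exp_le_exp.mpr (by nlinarith [ht.1])
    have hexp0 : (0:ℝ) < Real.exp (-lam*t) := Real.exp_pos _
    have habs : |y t - z t| ≤ (1 / Real.Gamma α) *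
        (Real.exp (lam*a) * C * (a ^ α / α) + Real.exp (lam*a) * C * (a ^ α / α)) := by
      rw [hyz, abs_mul, abs_of_pos (div_pos hexp0 hΓα)]
      have htri : |(((∫ s in (0:ℝ)..a, Real.exp (lam*s) * (a-s)^(α-1) * ftilde s (z s)) -
          (∫ s in (0:ℝ)..a, Real.exp (lam*s) * (a-s)^(α-1) * f s (y s))) -
         ((∫ s in (0:ℝ)..t, Real.exp (lam*s) * (t-s)^(α-1) * ftilde s (z s)) -
          (∫ s in (0:ℝ)..t, Real.exp (lam*s) * (t-s)^(α-1) * f s (y s))))|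
          ≤ Real.exp (lam*a) * C * (a ^ α / α) + Real.exp (lam*a) * C * (a ^ α / α) := by
        rw [abs_sub_comm] at hAbd hBbd
        calc _ ≤ _ := abs_sub _ _
          _ ≤ _ := add_le_add hAbd hBbd
      have hc1 : Real.exp (-lam*t) / Real.Gamma α ≤ 1 / Real.Gamma α := by
        gcongr
      have hnn : (0:ℝ) ≤ Real.exp (lam*a) * C * (a ^ α / α) + Real.exp (lam*a) * C * (a ^ α / α) := by
        positivity
      exact mul_le_mul hc1 htri (abs_nonneg _) (by positivity)
    calc |y t - z t| ≤ _ := habs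
      _ = K * C := by
        rw [hK, hΓadd]
        field_simp
        ring
  -- conclude
  have hβ : 0 < 1 - K * L := by linarith
  have hMbd : M ≤ K * ε / (1 - K * L) := by
    have hc := claim t₀ ht₀
    rw [le_div_iff₀ hβ]
    rw [hCdef] at hc
    nlinarith [hc]
  intro t ht
  have h1 : |y t - z t| ≤ M := hM t ht
  have h2 : (2 * a ^ α * Real.exp (lam * a) /
      ((1 - 2 * L * a ^ α * Real.exp (lam * a) / Real.Gamma (α + 1)) *
        Real.Gamma (α + 1))) * ε = K * ε / (1 - K * L) := by
    have hrw : (1 : ℝ) - 2 * L * a ^ α * Real.exp (lam * a) / Real.Gamma (α + 1)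
        = 1 - K * L := by rw [hK]; ring
    have h3 : 2 * a ^ α * Real.exp (lam * a) / ((1 - K * L) * Real.Gamma (α + 1))
        = K / (1 - K * L) := by
      rw [mul_comm (1 - K * L), ← div_div, ← hK]
    rw [hrw, h3, div_mul_eq_mul_div]
  rw [h2]
  linarith
end

section
/- Let 0 < α < 1, λ ≥ 0, a > 0, f : [0,a] × ℝ → ℝ continuous, and y₀ ∈ ℝ. If u is a solution of the Caputo-type integral equation u(t) = y₀ + (1/Γ(α)) ∫₀ᵗ (t-s)^{α-1} e^{λs} f(s, e^{-λs} u(s)) ds on [0,a], then y(t) = e^{-λt} u(t) solves the tempered Volterra integral equation y(t) = y₀ e^{-λt} + (1/Γ(α)) ∫₀ᵗ e^{-λ(t-s)} (t-s)^{α-1} f(s, y(s)) ds on [0,a], and conversely. -/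
open Real Set

lemma tempered_integral_eq (α lam t : ℝ) (g : ℝ → ℝ) :
    (∫ s in (0 : ℝ)..t, Real.exp (-lam * (t - s)) * (t - s) ^ (α - 1) * g s)
      = Real.exp (-lam * t) *
        ∫ s in (0 : ℝ)..t, (t - s) ^ (α - 1) * (Real.exp (lam * s) * g s) := by
  rw [← intervalIntegral.integral_const_mul]
  apply intervalIntegral.integral_congr
  intro s _
  dsimp only
  have : -lam * (t - s) = -lam * t + lam * s := by ring
  rw [this, Real.exp_add]
  ring

/-- u solves the non-tempered Caputo-type integral equation with
g(s,v) = e^{λs} f(s, e^{-λs} v) iff y(t) = e^{-λt} u(t) solves the tempered Volterra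
integral equation. -/
theorem caputo_integral_equation_iff_tempered
    (α lam a y₀ : ℝ) (hα0 : 0 < α) (hα1 : α < 1) (hlam : 0 ≤ lam) (ha : 0 < a)
    (f : ℝ → ℝ → ℝ) (hf : Continuous fun p : ℝ × ℝ => f p.1 p.2)
    (u : ℝ → ℝ) (hu : ContinuousOn u (Set.Icc 0 a)) :
    (∀ t ∈ Set.Icc (0 : ℝ) a,
        u t = y₀ +
          (1 / Real.Gamma α) *
            ∫ s in (0 : ℝ)..t, (t - s) ^ (α - 1) *
              (Real.exp (lam * s) * f s (Real.exp (-lam * s) * u s))) ↔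
      (∀ t ∈ Set.Icc (0 : ℝ) a,
        Real.exp (-lam * t) * u t = y₀ * Real.exp (-lam * t) +
          (1 / Real.Gamma α) *
            ∫ s in (0 : ℝ)..t, Real.exp (-lam * (t - s)) * (t - s) ^ (α - 1) *
              f s (Real.exp (-lam * s) * u s)) := by
  constructor <;> intro h t ht <;> have h' := h t ht <;>
    rw [tempered_integral_eq α lam t (fun s => f s (Real.exp (-lam * s) * u s))] at * <;>
    have hne := Real.exp_ne_zero (-lam * t)
  · rw [h']; ring
  · have : Real.exp (-lam * t) * u t =
        Real.exp (-lam * t) * (y₀ + (1 / Real.Gamma α) *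
          ∫ s in (0 : ℝ)..t, (t - s) ^ (α - 1) *
            (Real.exp (lam * s) * f s (Real.exp (-lam * s) * u s))) := by
      rw [h']; ring
    exact mul_left_cancel₀ hne this
end
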